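/- arXiv:1212.6973 — 4 statements merged into one kernel-verified Lean document; each statement's English description precedes it below -/
import Mathlib

section
/- Let Ω ⊂ ℝ² be a bounded open set and let μ = Σ_{z∈Z} v_z δ_z be an atomic measure with finite support Z ⊂ Ω, all v_z > 0, and μ(Ω) = |Ω| (Lebesgue area). Then the minimal linear transport cost min{ ∫_Ω |x − T(x)| dx : T: Ω → Z measurable with |T⁻¹({z})| = μ({z}) for all z ∈ Z } equals sup{ ∫_Ω φ dμ : φ: Ω → ℝ is 1-Lipschitz and ∫_Ω φ(x) dx = 0 }. -/
open MeasureTheory Real Filter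
open scoped ENNReal RealInnerProductSpace

noncomputable section

/-- The plane `ℝ²`. -/
abbrev Plane := EuclideanSpace ℝ (Fin 2)

/-- The point `(a, b)` of the plane. -/
def mk2 (a b : ℝ) : Plane := (WithLp.equiv 2 (Fin 2 → ℝ)).symm ![a, b]

/-- The constant `c₆ = 5√3/54`. -/
def c6 : ℝ := 5 * Real.sqrt 3 / 54

/-- The volume `V_λ = (2c₆/λ)^(2/3)` of the scaled domain. -/
def Vlam (lam : ℝ) : ℝ := (2 * c6 / lam) ^ ((2 : ℝ) / 3)

/-- The scaled domain `Ω_λ = V_λ^(1/2)·Ω`. -/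
def scaledDomain (lam : ℝ) (Omega : Set Plane) : Set Plane :=
  (fun x : Plane => Real.sqrt (Vlam lam) • x) '' Omega

/-- An admissible atomic measure on `Ω_λ`, encoded by its finite support `Z ⊆ Ω_λ` and
its weights `v`, which are positive on `Z` and of total mass `V_λ`. -/
def Admissible (lam : ℝ) (Omlam : Set Plane) (Z : Finset Plane) (v : Plane → ℝ) : Prop :=
  (↑Z : Set Plane) ⊆ Omlam ∧ (∀ z ∈ Z, 0 < v z) ∧ ∑ z ∈ Z, v z = Vlam lam

/-- A transport map between the Lebesgue measure on `Ω_λ` and the atomic measure `(Z, v)`: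
a measurable map `T : Ω_λ → Z` with `|T⁻¹({z})| = v z` for all `z ∈ Z`. -/
def IsTransportMap (Omlam : Set Plane) (Z : Finset Plane) (v : Plane → ℝ)
    (T : Plane → Plane) : Prop :=
  Measurable T ∧ (∀ x ∈ Omlam, T x ∈ Z) ∧
    ∀ z ∈ Z, (volume {x | x ∈ Omlam ∧ T x = z}).toReal = v z

/-- The quadratic optimal transport cost `W(L_{Ω_λ}, μ)`. -/
def transportCost (Omlam : Set Plane) (Z : Finset Plane) (v : Plane → ℝ) : ℝ :=
  sInf {c : ℝ | ∃ T : Plane → Plane, IsTransportMap Omlam Z v T ∧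
    c = ∫ x in Omlam, ‖x - T x‖ ^ 2}

/-- The energy `E_λ(μ) = 2c₆ Σ_z v_z^(1/2) + W(L_{Ω_λ}, μ)`. -/
def energy (Omlam : Set Plane) (Z : Finset Plane) (v : Plane → ℝ) : ℝ :=
  2 * c6 * ∑ z ∈ Z, Real.sqrt (v z) + transportCost Omlam Z v

/-- A convex polygon with at most `n` sides: a compact set with nonempty interior which is an
intersection of at most `n` closed half-planes. -/
def IsConvexPolygon (P : Set Plane) (n : ℕ) : Prop :=
  IsCompact P ∧ (interior P).Nonempty ∧
    ∃ H : Finset (Plane × ℝ), H.card ≤ n ∧ (∀ h ∈ H, h.1 ≠ 0) ∧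
      P = {x : Plane | ∀ h ∈ H, ⟪h.1, x⟫ ≤ h.2}

namespace KRD

lemma abs_inf'_sub_inf'_le {ι : Type*} (s : Finset ι) (hs : s.Nonempty) (f g : ι → ℝ) {C : ℝ}
    (h : ∀ i ∈ s, |f i - g i| ≤ C) : |s.inf' hs f - s.inf' hs g| ≤ C := by
  rw [abs_sub_le_iff]
  constructor
  · obtain ⟨j, hj, hje⟩ := s.exists_mem_eq_inf' hs g
    have h1 : s.inf' hs f ≤ f j := Finset.inf'_le _ hj
    have h2 := h j hj
    rw [hje]
    have := abs_le.1 h2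
    linarith [this.2]
  · obtain ⟨j, hj, hje⟩ := s.exists_mem_eq_inf' hs f
    have h1 : s.inf' hs g ≤ g j := Finset.inf'_le _ hj
    have h2 := h j hj
    rw [hje]
    have := abs_le.1 h2
    linarith [this.1]

lemma abs_inf'_le {ι : Type*} (s : Finset ι) (hs : s.Nonempty) (f : ι → ℝ) {C : ℝ}
    (h : ∀ i ∈ s, |f i| ≤ C) : |s.inf' hs f| ≤ C := by
  obtain ⟨j, hj, hje⟩ := s.exists_mem_eq_inf' hs f
  rw [hje]; exact h j hj

lemma continuous_inf' {ι : Type*} (s : Finset ι) (hs : s.Nonempty) (f : ι → Plane → ℝ)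
    (h : ∀ i ∈ s, Continuous (f i)) : Continuous (fun x => s.inf' hs (fun i => f i x)) := by
  induction hs using Finset.Nonempty.cons_induction with
  | singleton i => simp only [Finset.inf'_singleton]; exact h i (by simp)
  | cons i s hi hs ih =>
    have hx : ∀ x : Plane, (Finset.cons i s hi).inf' (Finset.cons_nonempty hi) (fun j => f j x)
        = min (f i x) (s.inf' hs (fun j => f j x)) := by
      intro x; rw [Finset.inf'_cons]
    simp only [hx]
    exact (h i (by simp)).min (ih (fun j hj => h j (by simp [hj])))

lemma measurable_of_finite_fibers {f : Plane → Plane} (s : Finset Plane) (hr : ∀ x, f x ∈ s)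
    (hf : ∀ y ∈ s, MeasurableSet (f ⁻¹' {y})) : Measurable f := by
  intro B hB
  classical
  have : f ⁻¹' B = ⋃ y ∈ s.filter (· ∈ B), f ⁻¹' {y} := by
    ext x
    simp only [Set.mem_preimage, Set.mem_iUnion, Finset.mem_filter]
    constructor
    · intro hx; exact ⟨f x, ⟨hr x, hx⟩, rfl⟩
    · rintro ⟨y, ⟨-, hy⟩, rfl⟩; exact hy
  rw [this]
  exact MeasurableSet.biUnion (Finset.countable_toSet _) (fun y hy => hf y (Finset.mem_filter.1 hy).1)

lemma integrableOn_of_bdd {f : Plane → ℝ} {s : Set Plane} (hs : MeasurableSet s) (hvol : volume s < ⊤)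
    (hm : AEStronglyMeasurable f (volume.restrict s)) {C : ℝ} (hC : ∀ x ∈ s, |f x| ≤ C) :
    IntegrableOn f s := by
  haveI : IsFiniteMeasure (volume.restrict s) :=
    ⟨by rw [Measure.restrict_apply_univ]; exact hvol⟩
  refine ⟨hm, ?_⟩
  apply MeasureTheory.HasFiniteIntegral.of_bounded (C := C)
  exact (ae_restrict_iff' hs).2 (Filter.Eventually.of_forall (fun x hx => by simpa using hC x hx))


def pickMin (k : Plane → Plane → ℝ) : List Plane → Plane → Plane
  | [], _ => mk2 0 0
  | [z], _ => z
  | z :: z' :: l, x =>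
    if k z x ≤ k (pickMin k (z' :: l) x) x then z else pickMin k (z' :: l) x

lemma pickMin_mem (k : Plane → Plane → ℝ) :
    ∀ (l : List Plane), l ≠ [] → ∀ x, pickMin k l x ∈ l
  | [], h, _ => absurd rfl h
  | [z], _, x => by simp [pickMin]
  | z :: z' :: l, _, x => by
    have ih := pickMin_mem k (z' :: l) (by simp) x
    by_cases h : k z x ≤ k (pickMin k (z' :: l) x) x <;> simp [pickMin, h, ih]

lemma pickMin_le (k : Plane → Plane → ℝ) :
    ∀ (l : List Plane) (x) (z), z ∈ l → k (pickMin k l x) x ≤ k z x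
  | [], _, _, hz => by simp at hz
  | [w], x, z, hz => by
    simp at hz; subst hz; simp [pickMin]
  | w :: w' :: l, x, z, hz => by
    have ih := pickMin_le k (w' :: l) x
    by_cases h : k w x ≤ k (pickMin k (w' :: l) x) x
    · simp only [pickMin, if_pos h]
      rcases List.mem_cons.1 hz with rfl | hz'
      · exact le_refl _
      · exact le_trans h (ih z hz')
    · simp only [pickMin, if_neg h]
      rcases List.mem_cons.1 hz with rfl | hz'
      · exact le_of_not_ge h
      · exact ih z hz'

lemma pickMin_fiber (k : Plane → Plane → ℝ) (hk : ∀ z, Measurable (fun x => k z x)) :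
    ∀ (l : List Plane) (y : Plane), MeasurableSet {x | pickMin k l x = y}
  | [], y => by
    by_cases h : mk2 0 0 = y <;> simp [pickMin, h]
  | [z], y => by
    by_cases h : z = y <;> simp [pickMin, h]
  | z :: z' :: l, y => by
    have ih := pickMin_fiber k hk (z' :: l)
    have hmem := pickMin_mem k (z' :: l) (by simp)
    set P := pickMin k (z' :: l) with hP
    have hle : MeasurableSet {x | k z x ≤ k (P x) x} := by
      have : {x | k z x ≤ k (P x) x}
          = ⋃ w ∈ (z' :: l), ({x | P x = w} ∩ {x | k z x ≤ k w x}) := by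
        ext x
        simp only [Set.mem_setOf_eq, Set.mem_iUnion, Set.mem_inter_iff]
        constructor
        · intro hx; exact ⟨P x, hmem x, rfl, hx⟩
        · rintro ⟨w, _, hw, hx⟩; rw [hw]; exact hx
      rw [this]
      exact MeasurableSet.biUnion ((z' :: l).finite_toSet.countable)
        (fun w _ => (ih w).inter (measurableSet_le (hk z) (hk w)))
    have hpm : ∀ x, pickMin k (z :: z' :: l) x = if k z x ≤ k (P x) x then z else P x :=
      fun x => rfl
    have hdec : {x | pickMin k (z :: z' :: l) x = y}
        = ({x | k z x ≤ k (P x) x} ∩ {x : Plane | z = y})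
          ∪ ({x | k z x ≤ k (P x) x}ᶜ ∩ {x | P x = y}) := by
      ext x
      simp only [Set.mem_setOf_eq, Set.mem_union, Set.mem_inter_iff, Set.mem_compl_iff, hpm]
      by_cases h : k z x ≤ k (P x) x <;> simp [h]
    rw [hdec]
    refine (hle.inter ?_).union (hle.compl.inter (ih y))
    by_cases hzy : z = y <;> simp [hzy]
lemma H_mono {r : ℝ} (hr : r ≠ 0) : StrictMono (fun u : ℝ => u / Real.sqrt (r^2 + u^2)) := by
  intro u w huw
  have hr2 : 0 < r^2 := by positivity
  have hu2 : 0 < r^2 + u^2 := by positivity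
  have hw2 : 0 < r^2 + w^2 := by positivity
  have ha : 0 < Real.sqrt (r^2+u^2) := Real.sqrt_pos.2 hu2
  have hb : 0 < Real.sqrt (r^2+w^2) := Real.sqrt_pos.2 hw2
  have ha2 : Real.sqrt (r^2+u^2)^2 = r^2+u^2 := Real.sq_sqrt hu2.le
  have hb2 : Real.sqrt (r^2+w^2)^2 = r^2+w^2 := Real.sq_sqrt hw2.le
  set a := Real.sqrt (r^2+u^2)
  set b := Real.sqrt (r^2+w^2)
  simp only
  rw [div_lt_div_iff₀ ha hb]
  rcases le_or_gt 0 u with hu | hu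
  · have hw : 0 < w := lt_of_le_of_lt hu huw
    have husq : u^2 < w^2 := by nlinarith
    have h3 : (u*b)^2 < (w*a)^2 := by
      have e1 : (u*b)^2 = u^2*(r^2+w^2) := by rw [mul_pow, hb2]
      have e2 : (w*a)^2 = w^2*(r^2+u^2) := by rw [mul_pow, ha2]
      rw [e1, e2]
      nlinarith [mul_pos (sub_pos.2 husq) hr2]
    nlinarith [mul_pos hw ha, mul_nonneg hu hb.le]
  · rcases le_or_gt w 0 with hw | hw
    · have husq : w^2 < u^2 := by nlinarith
      have h3 : (w*a)^2 < (u*b)^2 := by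
        have e1 : (u*b)^2 = u^2*(r^2+w^2) := by rw [mul_pow, hb2]
        have e2 : (w*a)^2 = w^2*(r^2+u^2) := by rw [mul_pow, ha2]
        rw [e1, e2]
        nlinarith [mul_pos (sub_pos.2 husq) hr2]
      have h4 : u * b < 0 := mul_neg_of_neg_of_pos hu hb
      have h5 : w * a ≤ 0 := mul_nonpos_of_nonpos_of_nonneg hw ha.le
      nlinarith
    · have h1 : u * b < 0 := mul_neg_of_neg_of_pos hu hb
      have h2 : 0 < w * a := mul_pos hw ha
      linarith

lemma g_strictMono {r d : ℝ} (hr : r ≠ 0) (hd : 0 < d) :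
    StrictMono (fun t : ℝ => Real.sqrt (r^2 + t^2) - Real.sqrt (r^2 + (t-d)^2)) := by
  have hderiv : ∀ t : ℝ, HasDerivAt (fun t => Real.sqrt (r^2 + t^2) - Real.sqrt (r^2 + (t-d)^2))
      (t / Real.sqrt (r^2 + t^2) - (t-d) / Real.sqrt (r^2 + (t-d)^2)) t := by
    intro t
    have h1 : HasDerivAt (fun t : ℝ => r^2 + t^2) (2*t) t := by
      simpa using (hasDerivAt_pow 2 t).const_add (r^2)
    have h2 : HasDerivAt (fun t : ℝ => r^2 + (t-d)^2) (2*(t-d)) t := by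
      have hid : HasDerivAt (fun t : ℝ => t - d) 1 t := (hasDerivAt_id t).sub_const d
      simpa using (hid.pow 2).const_add (r^2)
    have h1s := h1.sqrt (by positivity : r^2 + t^2 ≠ 0)
    have h2s := h2.sqrt (by positivity : r^2 + (t-d)^2 ≠ 0)
    have := h1s.sub h2s
    refine this.congr_deriv ?_
    have s1 : Real.sqrt (r^2 + t^2) ≠ 0 := by positivity
    have s2 : Real.sqrt (r^2 + (t-d)^2) ≠ 0 := by positivity
    field_simp
  apply strictMono_of_deriv_pos
  intro t
  rw [(hderiv t).deriv]
  have := H_mono hr (show t - d < t by linarith)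
  simp only at this
  linarith



lemma mk2_apply_zero (a b : ℝ) : mk2 a b 0 = a := rfl
lemma mk2_apply_one (a b : ℝ) : mk2 a b 1 = b := rfl

lemma plane_ext {x y : Plane} (h0 : x 0 = y 0) (h1 : x 1 = y 1) : x = y := by
  ext i
  fin_cases i
  · exact h0
  · exact h1

lemma plane_norm_eq (x : Plane) : ‖x‖ = Real.sqrt (x 0 ^ 2 + x 1 ^ 2) := by
  rw [EuclideanSpace.norm_eq]
  congr 1
  rw [Fin.sum_univ_two]
  simp [sq_abs]

def rotFun (a b : ℝ) : Plane → Plane := fun x => mk2 (a * x 0 + b * x 1) (-b * x 0 + a * x 1)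

lemma rotFun_apply_zero (a b : ℝ) (x : Plane) : rotFun a b x 0 = a * x 0 + b * x 1 := rfl
lemma rotFun_apply_one (a b : ℝ) (x : Plane) : rotFun a b x 1 = -b * x 0 + a * x 1 := rfl

def rotLIE (a b : ℝ) (hab : a^2 + b^2 = 1) : Plane ≃ₗᵢ[ℝ] Plane where
  toFun := rotFun a b
  invFun := fun x => mk2 (a * x 0 - b * x 1) (b * x 0 + a * x 1)
  map_add' := by
    intro x y
    apply plane_ext
    · simp [rotFun_apply_zero, mk2_apply_zero, PiLp.add_apply]; ring
    · simp [rotFun_apply_one, mk2_apply_one, PiLp.add_apply]; ring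
  map_smul' := by
    intro r x
    apply plane_ext
    · simp [rotFun_apply_zero, mk2_apply_zero, PiLp.smul_apply, smul_eq_mul]; ring
    · simp [rotFun_apply_one, mk2_apply_one, PiLp.smul_apply, smul_eq_mul]; ring
  left_inv := by
    intro x
    apply plane_ext
    · simp only [mk2_apply_zero, mk2_apply_one, rotFun_apply_zero, rotFun_apply_one]
      linear_combination (x 0) * hab
    · simp only [mk2_apply_zero, mk2_apply_one, rotFun_apply_zero, rotFun_apply_one]
      linear_combination (x 1) * hab
  right_inv := by
    intro x
    apply plane_ext
    · simp only [mk2_apply_zero, mk2_apply_one, rotFun_apply_zero, rotFun_apply_one]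
      linear_combination (x 0) * hab
    · simp only [mk2_apply_zero, mk2_apply_one, rotFun_apply_zero, rotFun_apply_one]
      linear_combination (x 1) * hab
  norm_map' := by
    intro x
    show ‖rotFun a b x‖ = ‖x‖
    rw [plane_norm_eq (rotFun a b x), plane_norm_eq x, rotFun_apply_zero, rotFun_apply_one]
    congr 1
    linear_combination (x 0 ^ 2 + x 1 ^ 2) * hab



lemma tie_null (z z' : Plane) (hzz : z ≠ z') (c : ℝ) :
    volume {x : Plane | ‖x - z‖ - ‖x - z'‖ = c} = 0 := by
  set d := ‖z' - z‖ with hd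
  have hd0 : 0 < d := by
    rw [hd, norm_pos_iff]
    exact sub_ne_zero.2 (Ne.symm hzz)
  set u : Plane := d⁻¹ • (z' - z) with hu_def
  have hu_norm : ‖u‖ = 1 := by
    rw [hu_def, norm_smul, norm_inv, Real.norm_eq_abs, abs_of_pos hd0, ← hd]
    exact inv_mul_cancel₀ hd0.ne'
  have hu : u 0 ^ 2 + u 1 ^ 2 = 1 := by
    have h2 := plane_norm_eq u
    rw [hu_norm] at h2
    have h3 : Real.sqrt (u 0 ^2 + u 1^2) = 1 := h2.symm
    have := Real.sqrt_eq_one.1 h3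
    linarith [this]
  have hab : (u 1)^2 + (-(u 0))^2 = 1 := by rw [neg_pow]; simp; linarith [hu]
  set Φ := rotLIE (u 1) (-(u 0)) hab with hΦ
  have hΦ_app : ∀ x : Plane, Φ x = rotFun (u 1) (-(u 0)) x := fun _ => rfl
  have hΦu : Φ (z' - z) = mk2 0 d := by
    have hz' : z' - z = d • u := by
      rw [hu_def, smul_smul, mul_inv_cancel₀ hd0.ne', one_smul]
    rw [hz', _root_.map_smul]
    have hΦuu : Φ u = mk2 0 1 := by
      apply plane_ext
      · rw [hΦ_app, rotFun_apply_zero, mk2_apply_zero]; ring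
      · rw [hΦ_app, rotFun_apply_one, mk2_apply_one]; linear_combination hu
    rw [hΦuu]
    apply plane_ext
    · simp [mk2_apply_zero, PiLp.smul_apply]
    · simp [mk2_apply_one, PiLp.smul_apply]
  set a : Plane := Φ z with ha_def
  have hb : Φ z' = a + mk2 0 d := by
    rw [ha_def, ← hΦu, ← map_add]
    congr 1
    abel
  have hset : {x : Plane | ‖x - z‖ - ‖x - z'‖ = c}
      = Φ ⁻¹' {y : Plane | ‖y - a‖ - ‖y - (a + mk2 0 d)‖ = c} := by
    ext x
    simp only [Set.mem_setOf_eq, Set.mem_preimage]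
    rw [← hb, ha_def, ← map_sub, ← map_sub, Φ.norm_map, Φ.norm_map]
  have hmeas2 : MeasurableSet {y : Plane | ‖y - a‖ - ‖y - (a + mk2 0 d)‖ = c} := by
    apply measurableSet_eq_fun
    · exact ((continuous_id.sub continuous_const).norm.sub
        (continuous_id.sub continuous_const).norm).measurable
    · exact measurable_const
  rw [hset, (Φ.measurePreserving).measure_preimage hmeas2.nullMeasurableSet]
  -- transfer to ℝ × ℝ
  set m : Plane ≃ᵐ (ℝ × ℝ) :=
    (MeasurableEquiv.toLp 2 (Fin 2 → ℝ)).symm.trans (MeasurableEquiv.finTwoArrow) with hm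
  have hmp : MeasurePreserving m volume volume :=
    (MeasureTheory.volume_preserving_finTwoArrow ℝ).comp
      (EuclideanSpace.volume_preserving_symm_measurableEquiv_toLp (Fin 2))
  have hm_app : ∀ y : Plane, m y = (y 0, y 1) := fun _ => rfl
  set S₃ : Set (ℝ × ℝ) := {p : ℝ × ℝ |
    Real.sqrt ((p.1 - a 0)^2 + (p.2 - a 1)^2)
      - Real.sqrt ((p.1 - a 0)^2 + (p.2 - a 1 - d)^2) = c} with hS₃
  have hS₃meas : MeasurableSet S₃ := by
    apply measurableSet_eq_fun
    · apply Measurable.sub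
      · exact (((measurable_fst.sub measurable_const).pow_const 2).add
          ((measurable_snd.sub measurable_const).pow_const 2)).sqrt
      · exact (((measurable_fst.sub measurable_const).pow_const 2).add
          ((measurable_snd.sub measurable_const).sub measurable_const |>.pow_const 2)).sqrt
    · exact measurable_const
  have hset2 : {y : Plane | ‖y - a‖ - ‖y - (a + mk2 0 d)‖ = c} = m ⁻¹' S₃ := by
    ext y
    simp only [Set.mem_setOf_eq, Set.mem_preimage, hm_app, hS₃]
    rw [plane_norm_eq (y - a), plane_norm_eq (y - (a + mk2 0 d))]
    have e0 : (y - a) 0 = y 0 - a 0 := rfl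
    have e1 : (y - a) 1 = y 1 - a 1 := rfl
    have e2 : (y - (a + mk2 0 d)) 0 = y 0 - a 0 := by
      show y 0 - (a + mk2 0 d) 0 = y 0 - a 0
      have : (a + mk2 0 d) 0 = a 0 + 0 := rfl
      rw [this]; ring
    have e3 : (y - (a + mk2 0 d)) 1 = y 1 - a 1 - d := by
      show y 1 - (a + mk2 0 d) 1 = y 1 - a 1 - d
      have : (a + mk2 0 d) 1 = a 1 + d := rfl
      rw [this]; ring
    rw [e0, e1, e2, e3]
  rw [hset2, hmp.measure_preimage hS₃meas.nullMeasurableSet]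
  -- Fubini: slices are subsingletons for s ≠ a 0
  rw [MeasureTheory.Measure.volume_eq_prod]
  rw [MeasureTheory.Measure.measure_prod_null hS₃meas]
  have hae : ∀ᵐ s : ℝ, s ≠ a 0 := by
    rw [ae_iff]
    have : {s : ℝ | ¬ s ≠ a 0} = {a 0} := by ext s; simp
    rw [this]
    exact measure_singleton _
  filter_upwards [hae] with s hs
  have hr : s - a 0 ≠ 0 := sub_ne_zero.2 hs
  have hsub : (Prod.mk s ⁻¹' S₃).Subsingleton := by
    intro t1 ht1 t2 ht2
    simp only [Set.mem_preimage, hS₃, Set.mem_setOf_eq] at ht1 ht2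
    have h2 : t1 - a 1 = t2 - a 1 :=
      (g_strictMono hr hd0).injective (ht1.trans ht2.symm)
    linarith
  show volume (Prod.mk s ⁻¹' S₃) = 0
  exact Set.Subsingleton.measure_zero hsub _


/-- The strict Laguerre-type cell of `z` for potential `ψ`. -/
def cell (Omega : Set Plane) (Z : Finset Plane) (ψ : Plane → ℝ) (z : Plane) : Set Plane :=
  {x | x ∈ Omega ∧ ∀ z' ∈ Z, z' ≠ z → ‖x - z‖ - ψ z < ‖x - z'‖ - ψ z'}

lemma inf'_sub_const {ι : Type*} (s : Finset ι) (hs : s.Nonempty) (f : ι → ℝ) (c : ℝ) :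
    s.inf' hs (fun i => f i - c) = s.inf' hs f - c := by
  apply le_antisymm
  · obtain ⟨j, hj, hje⟩ := s.exists_mem_eq_inf' hs f
    rw [hje]
    exact Finset.inf'_le _ hj
  · obtain ⟨j, hj, hje⟩ := s.exists_mem_eq_inf' hs (fun i => f i - c)
    rw [hje]
    have : s.inf' hs f ≤ f j := Finset.inf'_le _ hj
    linarith

lemma cell_measurable (Omega : Set Plane) (hopen : IsOpen Omega) (Z : Finset Plane)
    (ψ : Plane → ℝ) (z : Plane) : MeasurableSet (cell Omega Z ψ z) := by
  classical
  have : cell Omega Z ψ z = Omega ∩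
      ⋂ z' ∈ (↑(Z.erase z) : Set Plane), {x | ‖x - z‖ - ψ z < ‖x - z'‖ - ψ z'} := by
    ext x
    simp only [cell, Set.mem_setOf_eq, Set.mem_inter_iff, Set.mem_iInter, Finset.coe_erase,
      Set.mem_diff, Finset.mem_coe, Set.mem_singleton_iff]
    constructor
    · rintro ⟨hx, h⟩
      exact ⟨hx, fun z' hz' => h z' hz'.1 hz'.2⟩
    · rintro ⟨hx, h⟩
      exact ⟨hx, fun z' hz' hne => h z' ⟨hz', hne⟩⟩
  rw [this]
  refine hopen.measurableSet.inter ?_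
  refine MeasurableSet.biInter ((Z.erase z).finite_toSet.countable) (fun z' _ => ?_)
  exact measurableSet_lt
    (((continuous_id.sub continuous_const).norm.sub continuous_const).measurable)
    (((continuous_id.sub continuous_const).norm.sub continuous_const).measurable)

lemma exists_potential (Omega : Set Plane) (hopen : IsOpen Omega)
    (hbdd : Bornology.IsBounded Omega)
    (Z : Finset Plane) (v : Plane → ℝ) (hZ : (↑Z : Set Plane) ⊆ Omega) (hv : ∀ z ∈ Z, 0 < v z)
    (htot : ∑ z ∈ Z, v z = (volume Omega).toReal) (hZne : Z.Nonempty) :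
    ∃ ψ : Plane → ℝ, ∀ z ∈ Z, (volume (cell Omega Z ψ z)).toReal = v z := by
  classical
  obtain ⟨r, hr⟩ := hbdd.subset_closedBall 0
  set r₀ : ℝ := max r 0 with hr₀def
  have hr₀ : Omega ⊆ Metric.closedBall 0 r₀ :=
    hr.trans (Metric.closedBall_subset_closedBall (le_max_left _ _))
  have hr₀0 : 0 ≤ r₀ := le_max_right _ _
  have hdist : ∀ x ∈ Omega, ∀ z ∈ Z, ‖x - z‖ ≤ 2 * r₀ := by
    intro x hx z hz
    have h1 : ‖x‖ ≤ r₀ := by simpa using hr₀ hx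
    have h2 : ‖z‖ ≤ r₀ := by simpa using hr₀ (hZ hz)
    calc ‖x - z‖ ≤ ‖x‖ + ‖z‖ := norm_sub_le _ _
    _ ≤ 2 * r₀ := by linarith
  set V : ℝ := (volume Omega).toReal with hVdef
  have hvolfin : volume Omega < ⊤ := hbdd.measure_lt_top
  have hV0 : 0 ≤ V := ENNReal.toReal_nonneg
  have hΩmeas : MeasurableSet Omega := hopen.measurableSet
  -- the min function and its properties
  set F : (Plane → ℝ) → Plane → ℝ := fun ψ x => Z.inf' hZne (fun z => ‖x - z‖ - ψ z) with hFdef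
  have hFcont : ∀ ψ, Continuous (F ψ) := by
    intro ψ
    exact continuous_inf' Z hZne (fun z x => ‖x - z‖ - ψ z)
      (fun z _ => (continuous_id.sub continuous_const).norm.sub continuous_const)
  have hFbdd : ∀ ψ, ∀ x ∈ Omega, |F ψ x| ≤ 2 * r₀ + Z.sup' hZne (fun z => |ψ z|) := by
    intro ψ x hx
    apply abs_inf'_le
    intro z hz
    have := hdist x hx z hz
    have h2 : |ψ z| ≤ Z.sup' hZne (fun z => |ψ z|) := Finset.le_sup' (fun z => |ψ z|) hz
    calc |‖x - z‖ - ψ z| ≤ |‖x - z‖| + |ψ z| := abs_sub _ _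
    _ ≤ 2 * r₀ + Z.sup' hZne (fun z => |ψ z|) := by
        rw [abs_of_nonneg (norm_nonneg _)]; linarith
  have hFint : ∀ ψ, IntegrableOn (F ψ) Omega := by
    intro ψ
    exact integrableOn_of_bdd hΩmeas hvolfin
      ((hFcont ψ).aestronglyMeasurable.restrict) (hFbdd ψ)
  set G : (Plane → ℝ) → ℝ := fun ψ => (∑ z ∈ Z, v z * ψ z) + ∫ x in Omega, F ψ x with hGdef
  have hFcongr : ∀ ψ₁ ψ₂ : Plane → ℝ, (∀ z ∈ Z, ψ₁ z = ψ₂ z) → F ψ₁ = F ψ₂ := by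
    intro ψ₁ ψ₂ h
    funext x
    exact Finset.inf'_congr hZne rfl (fun z hz => by rw [h z hz])
  have hGcongr : ∀ ψ₁ ψ₂ : Plane → ℝ, (∀ z ∈ Z, ψ₁ z = ψ₂ z) → G ψ₁ = G ψ₂ := by
    intro ψ₁ ψ₂ h
    simp only [hGdef]
    rw [hFcongr ψ₁ ψ₂ h, Finset.sum_congr rfl (fun z hz => by rw [h z hz])]
  have hconstint : IntegrableOn (fun _ : Plane => (1:ℝ)) Omega := by
    exact integrableOn_const hvolfin.ne
  have hconstint' : ∀ c : ℝ, IntegrableOn (fun _ : Plane => c) Omega := by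
    intro c; exact integrableOn_const hvolfin.ne
  have hGshift : ∀ (ψ : Plane → ℝ) (c : ℝ), G (fun z => ψ z + c) = G ψ := by
    intro ψ c
    simp only [hGdef]
    have h1 : (∑ z ∈ Z, v z * (ψ z + c)) = (∑ z ∈ Z, v z * ψ z) + c * V := by
      rw [Finset.sum_congr rfl (fun z _ => mul_add (v z) (ψ z) c), Finset.sum_add_distrib,
        ← Finset.sum_mul, htot]
      ring
    have h2 : F (fun z => ψ z + c) = fun x => F ψ x - c := by
      funext x
      have : Z.inf' hZne (fun z => ‖x - z‖ - (ψ z + c))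
          = Z.inf' hZne (fun z => (‖x - z‖ - ψ z) - c) := by
        apply Finset.inf'_congr hZne rfl
        intro z _
        ring
      simp only [hFdef]
      rw [this, inf'_sub_const]
    rw [h1, h2]
    rw [MeasureTheory.integral_sub (hFint ψ) (hconstint' c)]
    rw [MeasureTheory.setIntegral_const c]
    simp only [smul_eq_mul, measureReal_def, ← hVdef]
    ring
  -- the finite-dimensional functional
  set ext : (↑Z → ℝ) → Plane → ℝ := fun p z => if h : z ∈ Z then p ⟨z, h⟩ else 0 with hext
  have hext_app : ∀ (p : ↑Z → ℝ) (z : Plane) (hz : z ∈ Z), ext p z = p ⟨z, hz⟩ := by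
    intro p z hz
    simp only [hext, dif_pos hz]
  set G' : (↑Z → ℝ) → ℝ := fun p => G (ext p) with hG'
  haveI : Nonempty ↑Z := ⟨⟨hZne.choose, hZne.choose_spec⟩⟩
  -- Lipschitz continuity of G'
  have hGlip : ∀ p q : ↑Z → ℝ, |G' p - G' q| ≤ 2 * V * dist p q := by
    intro p q
    have hzd : ∀ z (hz : z ∈ Z), |ext p z - ext q z| ≤ dist p q := by
      intro z hz
      rw [hext_app p z hz, hext_app q z hz, ← Real.dist_eq]
      exact dist_le_pi_dist p q _
    have hsum : |(∑ z ∈ Z, v z * ext p z) - ∑ z ∈ Z, v z * ext q z| ≤ V * dist p q := by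
      rw [← Finset.sum_sub_distrib]
      calc |∑ z ∈ Z, (v z * ext p z - v z * ext q z)|
          ≤ ∑ z ∈ Z, |v z * ext p z - v z * ext q z| := Finset.abs_sum_le_sum_abs _ _
        _ ≤ ∑ z ∈ Z, v z * dist p q := by
            apply Finset.sum_le_sum
            intro z hz
            rw [← mul_sub, abs_mul, abs_of_pos (hv z hz)]
            exact mul_le_mul_of_nonneg_left (hzd z hz) (hv z hz).le
        _ = V * dist p q := by rw [← Finset.sum_mul, htot]
    have hptw : ∀ x ∈ Omega, ‖F (ext p) x - F (ext q) x‖ ≤ dist p q := by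
      intro x _
      rw [Real.norm_eq_abs]
      apply abs_inf'_sub_inf'_le
      intro z hz
      have : ‖x - z‖ - ext p z - (‖x - z‖ - ext q z) = -(ext p z - ext q z) := by ring
      rw [this, abs_neg]
      exact hzd z hz
    have hint : |(∫ x in Omega, F (ext p) x) - ∫ x in Omega, F (ext q) x| ≤ dist p q * V := by
      rw [← MeasureTheory.integral_sub (hFint _) (hFint _), ← Real.norm_eq_abs]
      exact MeasureTheory.norm_setIntegral_le_of_norm_le_const hvolfin
        (fun x hx => hptw x hx)
    simp only [hG', hGdef]
    have := abs_add_le ((∑ z ∈ Z, v z * ext p z) - ∑ z ∈ Z, v z * ext q z)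
      ((∫ x in Omega, F (ext p) x) - ∫ x in Omega, F (ext q) x)
    calc |(∑ z ∈ Z, v z * ext p z) + (∫ x in Omega, F (ext p) x)
        - ((∑ z ∈ Z, v z * ext q z) + ∫ x in Omega, F (ext q) x)|
        = |((∑ z ∈ Z, v z * ext p z) - ∑ z ∈ Z, v z * ext q z)
          + ((∫ x in Omega, F (ext p) x) - ∫ x in Omega, F (ext q) x)| := by ring_nf
      _ ≤ |(∑ z ∈ Z, v z * ext p z) - ∑ z ∈ Z, v z * ext q z|
          + |(∫ x in Omega, F (ext p) x) - ∫ x in Omega, F (ext q) x| := by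
            exact abs_add_le _ _
      _ ≤ V * dist p q + dist p q * V := add_le_add hsum hint
      _ = 2 * V * dist p q := by ring
  have hG'cont : Continuous G' := by
    have h2V : (0:ℝ) ≤ 2 * V := by linarith
    apply LipschitzWith.continuous (K := Real.toNNReal (2*V))
    apply LipschitzWith.of_dist_le_mul
    intro p q
    rw [Real.dist_eq, Real.coe_toNNReal _ h2V]
    exact hGlip p q
  -- the compact box and maximizer
  set vmin : ℝ := Z.inf' hZne v with hvmin
  have hvmin0 : 0 < vmin := by
    obtain ⟨z, hz, hze⟩ := Z.exists_mem_eq_inf' hZne v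
    rw [hvmin, hze]
    exact hv z hz
  set M : ℝ := 2 * r₀ * V / vmin + 1 with hM
  have hM1 : 1 ≤ M := by
    have h : 0 ≤ 2 * r₀ * V / vmin := by positivity
    rw [hM]
    linarith
  have hM0 : (0:ℝ) ≤ M := by linarith
  set K : Set (↑Z → ℝ) := Set.Icc 0 (fun _ => M) with hK
  have hKcpt : IsCompact K := isCompact_Icc
  have hKne : K.Nonempty := ⟨0, Set.mem_Icc.2 ⟨le_refl _, fun ζ => hM0⟩⟩
  obtain ⟨pstar, hpK, hpmax⟩ := hKcpt.exists_isMaxOn hKne hG'cont.continuousOn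
  -- shift invariance for G'
  have hG'shift : ∀ (p : ↑Z → ℝ) (c : ℝ), G' (fun ζ => p ζ + c) = G' p := by
    intro p c
    simp only [hG']
    have h1 : G (ext fun ζ => p ζ + c) = G (fun z => ext p z + c) := by
      apply hGcongr
      intro z hz
      rw [hext_app (fun ζ => p ζ + c) z hz, hext_app p z hz]
    rw [h1, hGshift]
  -- global maximality
  have hglobal : ∀ ψ : Plane → ℝ, G ψ ≤ G (ext pstar) := by
    intro ψ
    set p : ↑Z → ℝ := fun ζ => ψ ↑ζ with hp
    have h1 : G ψ = G' p := by
      apply hGcongr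
      intro z hz
      rw [hext_app p z hz]
    set c : ℝ := Finset.univ.inf' Finset.univ_nonempty p with hc
    set q : ↑Z → ℝ := fun ζ => p ζ + (-c) with hq
    have h2 : G' q = G' p := hG'shift p (-c)
    have hq0 : ∀ ζ, 0 ≤ q ζ := by
      intro ζ
      have : c ≤ p ζ := Finset.inf'_le _ (Finset.mem_univ ζ)
      simp only [hq]; linarith
    by_cases hqM : ∀ ζ, q ζ ≤ M
    · have hqK : q ∈ K := Set.mem_Icc.2 ⟨fun ζ => hq0 ζ, fun ζ => hqM ζ⟩
      rw [h1, ← h2]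
      exact hpmax hqK
    · push_neg at hqM
      obtain ⟨ζm, hζm⟩ := hqM
      set R : ℝ := Finset.univ.sup' Finset.univ_nonempty q with hR
      have hMR : M < R := lt_of_lt_of_le hζm (Finset.le_sup' _ (Finset.mem_univ ζm))
      have hR0 : 0 < R := lt_of_lt_of_le (lt_of_lt_of_le one_pos hM1) hMR.le
      obtain ⟨ζ₀, _, hζ₀⟩ := Finset.univ.exists_mem_eq_inf' Finset.univ_nonempty p
      have hqζ₀ : q ζ₀ = 0 := by simp only [hq]; rw [hc, hζ₀]; ring
      obtain ⟨ζs, _, hζs⟩ := Finset.univ.exists_mem_eq_sup' Finset.univ_nonempty q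
      -- bound the sum part
      have hsum_eq : (∑ z ∈ Z, v z * ext q z) = ∑ ζ : ↑Z, v (↑ζ : Plane) * q ζ := by
        rw [Finset.univ_eq_attach, ← Finset.sum_attach Z (fun z => v z * ext q z)]
        apply Finset.sum_congr rfl
        intro ζ _
        rw [hext_app q _ ζ.2]
      have hsum_le : (∑ ζ : ↑Z, v (↑ζ : Plane) * q ζ) ≤ R * (V - vmin) := by
        have e1 : (∑ ζ ∈ Finset.univ.erase ζ₀, v ↑ζ * q ζ) + v ↑ζ₀ * q ζ₀
            = ∑ ζ : ↑Z, v (↑ζ : Plane) * q ζ := Finset.sum_erase_add _ _ (Finset.mem_univ ζ₀)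
        have e2 : (∑ ζ ∈ Finset.univ.erase ζ₀, v ↑ζ * q ζ)
            ≤ ∑ ζ ∈ Finset.univ.erase ζ₀, v ↑ζ * R := by
          apply Finset.sum_le_sum
          intro ζ _
          exact mul_le_mul_of_nonneg_left (Finset.le_sup' _ (Finset.mem_univ ζ)) (hv _ ζ.2).le
        have e3 : (∑ ζ ∈ Finset.univ.erase ζ₀, v ↑ζ * R)
            = ((∑ ζ : ↑Z, v (↑ζ : Plane)) - v ↑ζ₀) * R := by
          have h := Finset.sum_erase_add Finset.univ (fun ζ : ↑Z => v ↑ζ) (Finset.mem_univ ζ₀)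
          rw [← Finset.sum_mul, sub_mul]
          linear_combination R * h
        have e4 : (∑ ζ : ↑Z, v (↑ζ : Plane)) = V := by
          rw [Finset.univ_eq_attach, Finset.sum_attach Z v, htot]
        have e5 : vmin ≤ v ↑ζ₀ := Finset.inf'_le _ ζ₀.2
        have e6 : ((∑ ζ : ↑Z, v (↑ζ : Plane)) - v ↑ζ₀) * R ≤ (V - vmin) * R := by
          apply mul_le_mul_of_nonneg_right _ hR0.le
          rw [e4]; linarith
        calc (∑ ζ : ↑Z, v (↑ζ : Plane) * q ζ)
            = (∑ ζ ∈ Finset.univ.erase ζ₀, v ↑ζ * q ζ) + v ↑ζ₀ * q ζ₀ := e1.symm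
          _ = ∑ ζ ∈ Finset.univ.erase ζ₀, v ↑ζ * q ζ := by rw [hqζ₀]; ring
          _ ≤ ∑ ζ ∈ Finset.univ.erase ζ₀, v ↑ζ * R := e2
          _ = ((∑ ζ : ↑Z, v (↑ζ : Plane)) - v ↑ζ₀) * R := e3
          _ ≤ (V - vmin) * R := e6
          _ = R * (V - vmin) := by ring
      -- bound the integral part
      have hnormint : IntegrableOn (fun x => ‖x - (↑ζs : Plane)‖) Omega := by
        apply integrableOn_of_bdd hΩmeas hvolfin
        · exact ((continuous_id.sub continuous_const).norm).aestronglyMeasurable.restrict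
        · intro x hx
          rw [abs_of_nonneg (norm_nonneg _)]
          exact hdist x hx _ ζs.2
      have hint2 : IntegrableOn (fun x => ‖x - (↑ζs : Plane)‖ - R) Omega :=
        hnormint.sub (hconstint' R)
      have hint_le : (∫ x in Omega, F (ext q) x) ≤ 2 * r₀ * V - R * V := by
        have hptw : ∀ x ∈ Omega, F (ext q) x ≤ ‖x - ↑ζs‖ - R := by
          intro x hx
          have h := Finset.inf'_le (fun z => ‖x - z‖ - ext q z) ζs.2
          rw [hext_app q _ ζs.2] at h
          simp only [hFdef]
          rw [hR, hζs]
          exact h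
        have h1 : (∫ x in Omega, F (ext q) x) ≤ ∫ x in Omega, (‖x - ↑ζs‖ - R) :=
          MeasureTheory.setIntegral_mono_on (hFint (ext q)) hint2 hΩmeas hptw
        have h2 : (∫ x in Omega, (‖x - (↑ζs : Plane)‖ - R))
            = (∫ x in Omega, ‖x - (↑ζs : Plane)‖) - R * V := by
          rw [MeasureTheory.integral_sub hnormint (hconstint' R),
            MeasureTheory.setIntegral_const R]
          simp only [smul_eq_mul, measureReal_def, ← hVdef]
          ring
        have h3 : (∫ x in Omega, ‖x - (↑ζs : Plane)‖) ≤ 2 * r₀ * V := by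
          have := MeasureTheory.setIntegral_mono_on hnormint (hconstint' (2*r₀)) hΩmeas
            (fun x hx => hdist x hx _ ζs.2)
          rw [MeasureTheory.setIntegral_const (2*r₀)] at this
          simpa [smul_eq_mul, measureReal_def, ← hVdef, mul_comm] using this
        linarith
      have hq_lt : G' q < 0 := by
        have e7 : G' q = (∑ z ∈ Z, v z * ext q z) + ∫ x in Omega, F (ext q) x := rfl
        have e8 : M * vmin = 2 * r₀ * V + vmin := by
          rw [hM]; field_simp
        have e9 : M * vmin < R * vmin := by
          exact mul_lt_mul_of_pos_right hMR hvmin0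
        rw [e7]
        rw [hsum_eq]
        nlinarith [hsum_le, hint_le]
      have h0K : (0 : ↑Z → ℝ) ∈ K := Set.mem_Icc.2 ⟨le_refl _, fun _ => hM0⟩
      have hG'0 : 0 ≤ G' 0 := by
        have hz : ∀ z ∈ Z, ext (0 : ↑Z → ℝ) z = 0 := by
          intro z hz; rw [hext_app _ z hz]; rfl
        have h1 : G' 0 = (∑ z ∈ Z, v z * ext (0 : ↑Z → ℝ) z) + ∫ x in Omega, F (ext 0) x := rfl
        have h2 : (∑ z ∈ Z, v z * ext (0 : ↑Z → ℝ) z) = 0 := by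
          apply Finset.sum_eq_zero
          intro z hzz; rw [hz z hzz]; ring
        have h3 : 0 ≤ ∫ x in Omega, F (ext 0) x := by
          apply MeasureTheory.setIntegral_nonneg hΩmeas
          intro x hx
          simp only [hFdef]
          apply Finset.le_inf'
          intro z hzz
          rw [hz z hzz]
          simpa using norm_nonneg (x - z)
        rw [h1, h2]; linarith
      have : G' q < G' pstar := lt_of_lt_of_le (lt_of_lt_of_le hq_lt hG'0) (hpmax h0K)
      rw [h1, ← h2]
      exact this.le
  -- the optimal potential
  set ψs : Plane → ℝ := ext pstar with hψs
  refine ⟨ψs, ?_⟩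
  intro zb hzb
  set W : Set Plane := cell Omega Z ψs zb with hWd
  have hWmeas : MeasurableSet W := cell_measurable Omega hopen Z ψs zb
  have hWsub : W ⊆ Omega := fun x hx => hx.1
  set ind : Plane → ℝ := fun z => if z = zb then 1 else 0 with hind
  set Fq : ℝ → Plane → ℝ := fun t x => Z.inf' hZne (fun z => ‖x - z‖ - ψs z - t * ind z) with hFq
  set F' : Plane → ℝ := W.indicator (fun _ => (-1:ℝ)) with hF'
  have hFq_eq : ∀ t, Fq t = F (fun z => ψs z + t * ind z) := by
    intro t; funext x
    apply Finset.inf'_congr hZne rfl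
    intro z _; ring
  have hmeas1 : ∀ᶠ t in nhds (0:ℝ), AEStronglyMeasurable (Fq t) (volume.restrict Omega) :=
    Filter.Eventually.of_forall (fun t => by
      rw [hFq_eq]; exact (hFcont _).aestronglyMeasurable.restrict)
  have hint0 : Integrable (Fq 0) (volume.restrict Omega) := by
    rw [hFq_eq]; exact hFint _
  have hF'meas : AEStronglyMeasurable F' (volume.restrict Omega) :=
    ((measurable_const.indicator hWmeas).aestronglyMeasurable).restrict
  have hlip : ∀ᵐ x ∂(volume.restrict Omega),
      LipschitzOnWith (Real.nnabs 1) (fun t => Fq t x) (Metric.ball (0:ℝ) 1) := by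
    apply ae_of_all
    intro x
    have hL : LipschitzWith 1 (fun t => Fq t x) := by
      apply LipschitzWith.of_dist_le_mul
      intro t t'
      rw [Real.dist_eq, Real.dist_eq, NNReal.coe_one, one_mul]
      apply abs_inf'_sub_inf'_le
      intro z hz
      have : ‖x - z‖ - ψs z - t * ind z - (‖x - z‖ - ψs z - t' * ind z)
          = (t' - t) * ind z := by ring
      rw [this, abs_mul]
      by_cases hzzb : z = zb
      · simp [hind, hzzb, abs_sub_comm]
      · simp [hind, hzzb]
    have h1 : Real.nnabs 1 = 1 := by simp
    rw [h1]
    exact hL.lipschitzOnWith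
  have hbint : Integrable (fun _ : Plane => (1:ℝ)) (volume.restrict Omega) := hconstint
  -- tie set
  set N : Set Plane := ⋃ z' ∈ (↑(Z.erase zb) : Set Plane),
    {x : Plane | ‖x - zb‖ - ‖x - z'‖ = ψs zb - ψs z'} with hN
  have hNnull : volume N = 0 := by
    rw [hN]
    apply MeasureTheory.measure_biUnion_null_iff ((Z.erase zb).finite_toSet.countable) |>.2
    intro z' hz'
    have hne : zb ≠ z' := by
      have := Finset.mem_erase.1 (Finset.mem_coe.1 hz')
      exact this.1.symm
    exact tie_null zb z' hne _
  have hNae : ∀ᵐ x ∂(volume.restrict Omega), x ∉ N := by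
    apply ae_restrict_of_ae
    rw [ae_iff]
    simpa [Set.setOf_mem_eq] using hNnull
  have hΩae : ∀ᵐ x ∂(volume.restrict Omega), x ∈ Omega := ae_restrict_mem hΩmeas
  have hdiff : ∀ᵐ x ∂(volume.restrict Omega), HasDerivAt (fun t => Fq t x) (F' x) 0 := by
    filter_upwards [hNae, hΩae] with x hxN hxΩ
    rcases Finset.eq_empty_or_nonempty (Z.erase zb) with herase | herase
    · have hall : ∀ z ∈ Z, z = zb := by
        intro z hz
        by_contra hne
        have : z ∈ Z.erase zb := Finset.mem_erase.2 ⟨hne, hz⟩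
        rw [herase] at this
        simp at this
      have hfq : ∀ t, Fq t x = ‖x - zb‖ - ψs zb - t := by
        intro t
        apply le_antisymm
        · have h20 := Finset.inf'_le (fun z => ‖x - z‖ - ψs z - t * ind z) hzb
          have h21 : ‖x - zb‖ - ψs zb - t * ind zb = ‖x - zb‖ - ψs zb - t := by
            simp only [hind, if_pos rfl]
            ring
          rw [h21] at h20
          exact h20
        · apply Finset.le_inf'
          intro z hz
          rw [hall z hz]
          simp [hind]
      have hxW : x ∈ W := ⟨hxΩ, fun z' hz' hne => absurd (hall z' hz') hne⟩
      have hF'x : F' x = -1 := Set.indicator_of_mem hxW _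
      rw [hF'x]
      have heq : (fun t => Fq t x) = fun t => ‖x - zb‖ - ψs zb - t := funext hfq
      rw [heq]
      simpa using ((hasDerivAt_id (0:ℝ)).const_sub (‖x - zb‖ - ψs zb))
    · set A : ℝ := (Z.erase zb).inf' herase (fun z => ‖x - z‖ - ψs z) with hA
      set B : ℝ := ‖x - zb‖ - ψs zb with hB
      have hsplit : ∀ t, Fq t x = min (B - t) A := by
        intro t
        apply le_antisymm
        · apply le_min
          · have h20 := Finset.inf'_le (fun z => ‖x - z‖ - ψs z - t * ind z) hzb
            have h21 : ‖x - zb‖ - ψs zb - t * ind zb = B - t := by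
              rw [hB]
              simp only [hind, if_pos rfl]
              ring
            rw [h21] at h20
            exact h20
          · obtain ⟨z', hz', hze⟩ :=
              (Z.erase zb).exists_mem_eq_inf' herase (fun z => ‖x - z‖ - ψs z)
            have hz'Z : z' ∈ Z := Finset.mem_of_mem_erase hz'
            have hz'ne : z' ≠ zb := (Finset.mem_erase.1 hz').1
            have h5 := Finset.inf'_le (fun z => ‖x - z‖ - ψs z - t * ind z) hz'Z
            have h6 : ‖x - z'‖ - ψs z' - t * ind z' = ‖x - z'‖ - ψs z' := by
              simp [hind, hz'ne]
            have h7 : A = ‖x - z'‖ - ψs z' := by rw [hA]; exact hze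
            rw [h7]
            rw [h6] at h5
            exact h5
        · apply Finset.le_inf'
          intro z hz
          by_cases hze : z = zb
          · have : ‖x - z‖ - ψs z - t * ind z = B - t := by
              rw [hze]; simp [hind, hB]
            rw [this]
            exact min_le_left _ _
          · have h6 : A ≤ ‖x - z‖ - ψs z := Finset.inf'_le _ (Finset.mem_erase.2 ⟨hze, hz⟩)
            have : ‖x - z‖ - ψs z - t * ind z = ‖x - z‖ - ψs z := by
              simp [hind, hze]
            rw [this]
            exact le_trans (min_le_right _ _) h6
      have hBA : B ≠ A := by
        intro hBA
        obtain ⟨z', hz', hze⟩ :=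
          (Z.erase zb).exists_mem_eq_inf' herase (fun z => ‖x - z‖ - ψs z)
        apply hxN
        refine Set.mem_biUnion (Finset.mem_coe.2 hz') ?_
        show ‖x - zb‖ - ‖x - z'‖ = ψs zb - ψs z'
        have h7 : B = ‖x - z'‖ - ψs z' := by rw [hBA, hA]; exact hze
        rw [hB] at h7
        linarith
      rcases lt_or_gt_of_ne hBA with hlt | hgt
      · have hxW : x ∈ W := by
          refine ⟨hxΩ, ?_⟩
          intro z' hz' hne
          have h8 : A ≤ ‖x - z'‖ - ψs z' := Finset.inf'_le _ (Finset.mem_erase.2 ⟨hne, hz'⟩)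
          show ‖x - zb‖ - ψs zb < ‖x - z'‖ - ψs z'
          rw [← hB]
          linarith
        have hF'x : F' x = -1 := Set.indicator_of_mem hxW _
        rw [hF'x]
        have hev : (fun t => Fq t x) =ᶠ[nhds (0:ℝ)] (fun t => B - t) := by
          filter_upwards [Metric.ball_mem_nhds (0:ℝ) (show 0 < A - B by linarith)] with t ht
          rw [Metric.mem_ball, Real.dist_eq, sub_zero] at ht
          rw [hsplit t]
          apply min_eq_left
          have := abs_lt.1 ht
          linarith [this.1]
        have hder : HasDerivAt (fun t : ℝ => B - t) (-1) 0 := by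
          simpa using ((hasDerivAt_id (0:ℝ)).const_sub B)
        exact hder.congr_of_eventuallyEq hev
      · obtain ⟨z', hz', hze⟩ :=
          (Z.erase zb).exists_mem_eq_inf' herase (fun z => ‖x - z‖ - ψs z)
        have hxW : x ∉ W := by
          intro hxW
          have h9 := hxW.2 z' (Finset.mem_of_mem_erase hz') (Finset.mem_erase.1 hz').1
          have h10 : A = ‖x - z'‖ - ψs z' := by rw [hA]; exact hze
          have h12 : B = ‖x - zb‖ - ψs zb := hB
          linarith
        have hF'x : F' x = 0 := Set.indicator_of_notMem hxW _
        rw [hF'x]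
        have hev : (fun t => Fq t x) =ᶠ[nhds (0:ℝ)] (fun _ => A) := by
          filter_upwards [Metric.ball_mem_nhds (0:ℝ) (show 0 < B - A by linarith)] with t ht
          rw [Metric.mem_ball, Real.dist_eq, sub_zero] at ht
          rw [hsplit t]
          apply min_eq_right
          have := abs_lt.1 ht
          linarith [this.2]
        exact (hasDerivAt_const (0:ℝ) A).congr_of_eventuallyEq hev
  have key := (hasDerivAt_integral_of_dominated_loc_of_lip (μ := volume.restrict Omega)
    (F := fun t x => Fq t x) (F' := F') (x₀ := (0:ℝ)) (bound := fun _ => (1:ℝ))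
    (Metric.ball_mem_nhds (0:ℝ) one_pos) hmeas1 hint0 hF'meas hlip hbint hdiff).2
  have hintF' : (∫ x in Omega, F' x) = -(volume W).toReal := by
    rw [hF', MeasureTheory.setIntegral_indicator hWmeas]
    have : Omega ∩ W = W := Set.inter_eq_right.2 hWsub
    rw [this, MeasureTheory.setIntegral_const]
    simp [smul_eq_mul, measureReal_def]
  set hfun : ℝ → ℝ := fun t => ((∑ z ∈ Z, v z * ψs z) + t * v zb) + ∫ x in Omega, Fq t x
    with hhfun
  have hD : HasDerivAt hfun (v zb + ∫ x in Omega, F' x) 0 := by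
    have h1 : HasDerivAt (fun t : ℝ => (∑ z ∈ Z, v z * ψs z) + t * v zb) (v zb) 0 := by
      simpa using (hasDerivAt_mul_const (v zb)).const_add (∑ z ∈ Z, v z * ψs z)
    exact h1.add key
  have hGh : ∀ t, G (fun z => ψs z + t * ind z) = hfun t := by
    intro t
    simp only [hGdef, hhfun]
    congr 1
    · rw [Finset.sum_congr rfl (fun z hz => mul_add (v z) (ψs z) (t * ind z)),
        Finset.sum_add_distrib]
      congr 1
      have h12 : ∀ z ∈ Z, v z * (t * ind z) = if z = zb then v z * t else 0 := by
        intro z _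
        by_cases hz : z = zb
        · simp [hind, hz]
        · simp [hind, hz]
      rw [Finset.sum_congr rfl h12, Finset.sum_ite_eq' Z zb (fun z => v z * t), if_pos hzb]
      ring
    · rw [hFq_eq t]
  have hlocmax : IsLocalMax hfun 0 := by
    have h00 : hfun 0 = G ψs := by
      rw [← hGh 0]
      apply hGcongr
      intro z hz
      simp
    apply Filter.Eventually.of_forall
    intro t
    rw [h00, ← hGh t]
    exact hglobal _
  have hzero := hlocmax.hasDerivAt_eq_zero hD
  rw [hintF'] at hzero
  show (volume (cell Omega Z ψs zb)).toReal = v zb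
  rw [← hWd]
  linarith


lemma fiber_measurable {Omega : Set Plane} (hΩmeas : MeasurableSet Omega)
    {T : Plane → Plane} (hTmeas : Measurable T) (z : Plane) :
    MeasurableSet {x | x ∈ Omega ∧ T x = z} := by
  have : {x | x ∈ Omega ∧ T x = z} = Omega ∩ T ⁻¹' {z} := by
    ext x; simp [Set.mem_preimage]
  rw [this]
  exact hΩmeas.inter (hTmeas (measurableSet_singleton z))

lemma split_integral (Omega : Set Plane) (hΩmeas : MeasurableSet Omega) (Z : Finset Plane)
    (T : Plane → Plane) (hTmeas : Measurable T) (hTmem : ∀ x ∈ Omega, T x ∈ Z)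
    (f : Plane → ℝ) (hf : IntegrableOn f Omega) :
    ∫ x in Omega, f x = ∑ z ∈ Z, ∫ x in {x | x ∈ Omega ∧ T x = z}, f x := by
  have hcover : Omega = ⋃ z ∈ Z, {x | x ∈ Omega ∧ T x = z} := by
    ext x
    simp only [Set.mem_iUnion, Set.mem_setOf_eq]
    constructor
    · intro hx; exact ⟨T x, hTmem x hx, hx, rfl⟩
    · rintro ⟨z, _, hx, _⟩; exact hx
  have hmeas : ∀ z ∈ Z, MeasurableSet {x | x ∈ Omega ∧ T x = z} :=
    fun z _ => fiber_measurable hΩmeas hTmeas z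
  have hdisj : (↑Z : Set Plane).Pairwise (Function.onFun Disjoint fun z => {x | x ∈ Omega ∧ T x = z}) := by
    intro z1 _ z2 _ hne
    simp only [Function.onFun]
    rw [Set.disjoint_left]
    rintro x ⟨_, h1⟩ ⟨_, h2⟩
    exact hne (h1 ▸ h2 ▸ rfl)
  have hint : ∀ z ∈ Z, IntegrableOn f {x | x ∈ Omega ∧ T x = z} :=
    fun z _ => hf.mono_set (fun x hx => hx.1)
  conv_lhs => rw [hcover]
  exact MeasureTheory.integral_biUnion_finset Z hmeas hdisj hint

lemma weak_duality (Omega : Set Plane) (hopen : IsOpen Omega)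
    (hbdd : Bornology.IsBounded Omega) (Z : Finset Plane) (v : Plane → ℝ)
    (hZ : (↑Z : Set Plane) ⊆ Omega) (hΩne : Omega.Nonempty)
    (phi : Plane → ℝ) (hlip : LipschitzOnWith 1 phi Omega)
    (hint0 : (∫ x in Omega, phi x) = 0)
    (T : Plane → Plane) (hT : IsTransportMap Omega Z v T) :
    (∑ z ∈ Z, v z * phi z) ≤ ∫ x in Omega, ‖x - T x‖ := by
  classical
  obtain ⟨hTmeas, hTmem, hTvol⟩ := hT
  have hΩmeas := hopen.measurableSet
  have hvolfin : volume Omega < ⊤ := hbdd.measure_lt_top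
  obtain ⟨r, hr⟩ := hbdd.subset_closedBall 0
  set r₀ : ℝ := max r 0 with hr₀def
  have hr₀ : Omega ⊆ Metric.closedBall 0 r₀ :=
    hr.trans (Metric.closedBall_subset_closedBall (le_max_left _ _))
  have hr₀0 : 0 ≤ r₀ := le_max_right _ _
  have hdist : ∀ x ∈ Omega, ∀ y ∈ Omega, ‖x - y‖ ≤ 2 * r₀ := by
    intro x hx y hy
    have h1 : ‖x‖ ≤ r₀ := by simpa using hr₀ hx
    have h2 : ‖y‖ ≤ r₀ := by simpa using hr₀ hy
    calc ‖x - y‖ ≤ ‖x‖ + ‖y‖ := norm_sub_le _ _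
    _ ≤ 2 * r₀ := by linarith
  obtain ⟨x₀, hx₀⟩ := hΩne
  have hphibdd : ∀ x ∈ Omega, |phi x| ≤ |phi x₀| + 2 * r₀ := by
    intro x hx
    have h1 : dist (phi x) (phi x₀) ≤ 1 * dist x x₀ := hlip.dist_le_mul x hx x₀ hx₀
    rw [one_mul, Real.dist_eq, dist_eq_norm] at h1
    have h2 := hdist x hx x₀ hx₀
    have := abs_sub_abs_le_abs_sub (phi x) (phi x₀)
    linarith [abs_le.1 h1]
  have hphiint : IntegrableOn phi Omega :=
    integrableOn_of_bdd hΩmeas hvolfin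
      ((hlip.continuousOn).aestronglyMeasurable hΩmeas) hphibdd
  have hnTint : IntegrableOn (fun x => ‖x - T x‖) Omega := by
    apply integrableOn_of_bdd hΩmeas hvolfin
    · exact ((measurable_id.sub hTmeas).norm).aestronglyMeasurable.restrict
    · intro x hx
      rw [abs_of_nonneg (norm_nonneg _)]
      exact hdist x hx (T x) (hZ (hTmem x hx))
  set E : Plane → Set Plane := fun z => {x | x ∈ Omega ∧ T x = z} with hE
  have hEmeas : ∀ z, MeasurableSet (E z) := fun z => fiber_measurable hΩmeas hTmeas z
  have hEsub : ∀ z, E z ⊆ Omega := fun z x hx => hx.1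
  have hEvolfin : ∀ z, volume (E z) < ⊤ :=
    fun z => lt_of_le_of_lt (measure_mono (hEsub z)) hvolfin
  have step1 : ∀ z ∈ Z, v z * phi z ≤ ∫ x in E z, (phi x + ‖x - T x‖) := by
    intro z hz
    have hc : (∫ x in E z, phi z) = v z * phi z := by
      rw [MeasureTheory.setIntegral_const, smul_eq_mul]
      have : volume (E z) = volume {x | x ∈ Omega ∧ T x = z} := rfl
      rw [measureReal_def, this, hTvol z hz]
    have hptw : ∀ x ∈ E z, phi z ≤ phi x + ‖x - T x‖ := by
      rintro x ⟨hxΩ, hxT⟩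
      have h1 : dist (phi z) (phi x) ≤ 1 * dist z x := hlip.dist_le_mul z (hZ hz) x hxΩ
      rw [one_mul, Real.dist_eq, dist_eq_norm] at h1
      have h2 := (abs_le.1 h1).2
      have h3 : ‖z - x‖ = ‖x - T x‖ := by rw [hxT, norm_sub_rev]
      linarith
    have hmono := MeasureTheory.setIntegral_mono_on
      (integrableOn_const (hEvolfin z).ne)
      ((hphiint.mono_set (hEsub z)).add (hnTint.mono_set (hEsub z)))
      (hEmeas z) hptw
    rw [hc] at hmono
    exact hmono
  have step2 : (∑ z ∈ Z, ∫ x in E z, (phi x + ‖x - T x‖))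
      = ∫ x in Omega, (phi x + ‖x - T x‖) :=
    (split_integral Omega hΩmeas Z T hTmeas hTmem _ (hphiint.add hnTint)).symm
  have step3 : (∫ x in Omega, (phi x + ‖x - T x‖))
      = ∫ x in Omega, ‖x - T x‖ := by
    rw [MeasureTheory.integral_add hphiint hnTint, hint0, zero_add]
  calc (∑ z ∈ Z, v z * phi z) ≤ ∑ z ∈ Z, ∫ x in E z, (phi x + ‖x - T x‖) :=
        Finset.sum_le_sum step1
    _ = ∫ x in Omega, ‖x - T x‖ := by rw [step2, step3]

end KRD

/-- **Kantorovich–Rubinstein duality (the `p = ∞` case of Proposition 1).** For a bounded open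
`Ω ⊆ ℝ²` and an atomic measure `μ` with finite support in `Ω`, positive weights and total mass
`|Ω|`, the minimal linear transport cost between the Lebesgue measure on `Ω` and `μ` equals the
supremum of `∫_Ω φ dμ` over 1-Lipschitz functions `φ` on `Ω` with `∫_Ω φ dx = 0`. -/
theorem kantorovich_rubinstein_duality
    (Omega : Set Plane) (hopen : IsOpen Omega) (hbdd : Bornology.IsBounded Omega)
    (Z : Finset Plane) (v : Plane → ℝ)
    (hZ : (↑Z : Set Plane) ⊆ Omega) (hv : ∀ z ∈ Z, 0 < v z)
    (htot : ∑ z ∈ Z, v z = (volume Omega).toReal) :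
    sInf {c : ℝ | ∃ T : Plane → Plane, IsTransportMap Omega Z v T ∧
        c = ∫ x in Omega, ‖x - T x‖} =
      sSup {s : ℝ | ∃ phi : Plane → ℝ, LipschitzOnWith 1 phi Omega ∧
        (∫ x in Omega, phi x) = 0 ∧ s = ∑ z ∈ Z, v z * phi z} := by
  classical
  by_cases hempty : Omega = ∅
  · have hZempty : Z = ∅ := by
      rw [← Finset.coe_eq_empty]
      rw [hempty] at hZ
      exact Set.subset_empty_iff.1 hZ
    have hA : {c : ℝ | ∃ T : Plane → Plane, IsTransportMap Omega Z v T ∧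
        c = ∫ x in Omega, ‖x - T x‖} = {0} := by
      ext c
      simp only [Set.mem_setOf_eq, Set.mem_singleton_iff]
      constructor
      · rintro ⟨T, _, rfl⟩
        rw [hempty]
        simp
      · rintro rfl
        refine ⟨id, ⟨measurable_id, ?_, ?_⟩, ?_⟩
        · intro x hx
          rw [hempty] at hx
          simp at hx
        · intro z hz
          rw [hZempty] at hz
          simp at hz
        · rw [hempty]; simp
    have hB : {s : ℝ | ∃ phi : Plane → ℝ, LipschitzOnWith 1 phi Omega ∧
        (∫ x in Omega, phi x) = 0 ∧ s = ∑ z ∈ Z, v z * phi z} = {0} := by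
      ext s
      simp only [Set.mem_setOf_eq, Set.mem_singleton_iff]
      constructor
      · rintro ⟨phi, _, _, rfl⟩
        rw [hZempty]
        simp
      · rintro rfl
        refine ⟨fun _ => 0, ?_, ?_, ?_⟩
        · exact ((LipschitzWith.const (0:ℝ)).weaken (zero_le_one)).lipschitzOnWith
        · simp
        · rw [hZempty]; simp
    rw [hA, hB, csInf_singleton, csSup_singleton]
  · -- main case
    have hΩne : Omega.Nonempty := Set.nonempty_iff_ne_empty.2 hempty
    have hΩmeas := hopen.measurableSet
    have hvolpos : 0 < volume Omega := hopen.measure_pos volume hΩne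
    have hvolfin : volume Omega < ⊤ := hbdd.measure_lt_top
    have hV : 0 < (volume Omega).toReal := ENNReal.toReal_pos hvolpos.ne' hvolfin.ne
    have hZne : Z.Nonempty := by
      rcases Finset.eq_empty_or_nonempty Z with h | h
      · exfalso
        rw [h, Finset.sum_empty] at htot
        rw [← htot] at hV
        exact lt_irrefl 0 hV
      · exact h
    obtain ⟨r, hr⟩ := hbdd.subset_closedBall 0
    set r₀ : ℝ := max r 0 with hr₀def
    have hr₀ : Omega ⊆ Metric.closedBall 0 r₀ :=
      hr.trans (Metric.closedBall_subset_closedBall (le_max_left _ _))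
    have hr₀0 : 0 ≤ r₀ := le_max_right _ _
    have hdist : ∀ x ∈ Omega, ∀ y ∈ Omega, ‖x - y‖ ≤ 2 * r₀ := by
      intro x hx y hy
      have h1 : ‖x‖ ≤ r₀ := by simpa using hr₀ hx
      have h2 : ‖y‖ ≤ r₀ := by simpa using hr₀ hy
      calc ‖x - y‖ ≤ ‖x‖ + ‖y‖ := norm_sub_le _ _
      _ ≤ 2 * r₀ := by linarith
    obtain ⟨ψ, hψ⟩ := KRD.exists_potential Omega hopen hbdd Z v hZ hv htot hZne
    -- transport map by measurable selection of the argmin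
    set k : Plane → Plane → ℝ := fun z x => ‖x - z‖ - ψ z with hk
    have hkmeas : ∀ z, Measurable (fun x => k z x) :=
      fun z => ((continuous_id.sub continuous_const).norm.sub continuous_const).measurable
    set T : Plane → Plane := KRD.pickMin k Z.toList with hT
    have hlne : Z.toList ≠ [] := by
      intro h
      exact hZne.ne_empty (Finset.toList_eq_nil.1 h)
    have hTmem : ∀ x, T x ∈ Z := fun x =>
      Finset.mem_toList.1 (KRD.pickMin_mem k Z.toList hlne x)
    have hTle : ∀ (x : Plane), ∀ z ∈ Z, k (T x) x ≤ k z x := fun x z hz =>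
      KRD.pickMin_le k Z.toList x z (Finset.mem_toList.2 hz)
    have hTmeas : Measurable T :=
      KRD.measurable_of_finite_fibers Z hTmem
        (fun y _ => KRD.pickMin_fiber k hkmeas Z.toList y)
    set E : Plane → Set Plane := fun z => {x | x ∈ Omega ∧ T x = z} with hE
    have hEmeas : ∀ z, MeasurableSet (E z) := fun z => KRD.fiber_measurable hΩmeas hTmeas z
    have hEsub : ∀ z, E z ⊆ Omega := fun z x hx => hx.1
    have hEvolfin : ∀ z, volume (E z) < ⊤ :=
      fun z => lt_of_le_of_lt (measure_mono (hEsub z)) hvolfin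
    -- cells and fibers agree up to null sets
    have hWE : ∀ z ∈ Z, KRD.cell Omega Z ψ z ⊆ E z := by
      intro z hz x hx
      obtain ⟨hxΩ, hxlt⟩ := hx
      refine ⟨hxΩ, ?_⟩
      by_contra hne
      have h1 := hxlt (T x) (hTmem x) hne
      have h2 := hTle x z hz
      simp only [hk] at h2
      linarith
    have hEW : ∀ z ∈ Z, E z ⊆ KRD.cell Omega Z ψ z ∪
        (⋃ z' ∈ (↑(Z.erase z) : Set Plane), {x : Plane | ‖x - z‖ - ‖x - z'‖ = ψ z - ψ z'}) := by
      intro z hz x hx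
      obtain ⟨hxΩ, hxT⟩ := hx
      by_cases hcell : x ∈ KRD.cell Omega Z ψ z
      · exact Or.inl hcell
      · right
        have : ¬ (∀ z' ∈ Z, z' ≠ z → ‖x - z‖ - ψ z < ‖x - z'‖ - ψ z') := by
          intro hforall
          exact hcell ⟨hxΩ, hforall⟩
        push_neg at this
        obtain ⟨z', hz', hne, hge⟩ := this
        have h1 : k (T x) x ≤ k z' x := hTle x z' hz'
        rw [hxT] at h1
        simp only [hk] at h1
        have heq : ‖x - z‖ - ψ z = ‖x - z'‖ - ψ z' := le_antisymm h1 hge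
        refine Set.mem_biUnion (Finset.mem_coe.2 (Finset.mem_erase.2 ⟨hne, hz'⟩)) ?_
        show ‖x - z‖ - ‖x - z'‖ = ψ z - ψ z'
        linarith
    have hties : ∀ z ∈ Z, volume (⋃ z' ∈ (↑(Z.erase z) : Set Plane),
        {x : Plane | ‖x - z‖ - ‖x - z'‖ = ψ z - ψ z'}) = 0 := by
      intro z hz
      apply (MeasureTheory.measure_biUnion_null_iff ((Z.erase z).finite_toSet.countable)).2
      intro z' hz'
      have hne : z ≠ z' := (Finset.mem_erase.1 (Finset.mem_coe.1 hz')).1.symm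
      exact KRD.tie_null z z' hne _
    have hEvol : ∀ z ∈ Z, (volume (E z)).toReal = v z := by
      intro z hz
      have h1 : volume (E z) ≤ volume (KRD.cell Omega Z ψ z) := by
        calc volume (E z) ≤ volume (KRD.cell Omega Z ψ z ∪ _) := measure_mono (hEW z hz)
        _ ≤ volume (KRD.cell Omega Z ψ z) + volume (⋃ z' ∈ (↑(Z.erase z) : Set Plane),
            {x : Plane | ‖x - z‖ - ‖x - z'‖ = ψ z - ψ z'}) := measure_union_le _ _
        _ = volume (KRD.cell Omega Z ψ z) := by rw [hties z hz, add_zero]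
      have h2 : volume (KRD.cell Omega Z ψ z) ≤ volume (E z) := measure_mono (hWE z hz)
      rw [le_antisymm h1 h2]
      exact hψ z hz
    have hTmap : IsTransportMap Omega Z v T :=
      ⟨hTmeas, fun x _ => hTmem x, fun z hz => hEvol z hz⟩
    -- integrability facts
    have hnTint : IntegrableOn (fun x => ‖x - T x‖) Omega := by
      apply KRD.integrableOn_of_bdd hΩmeas hvolfin
      · exact ((measurable_id.sub hTmeas).norm).aestronglyMeasurable.restrict
      · intro x hx
        rw [abs_of_nonneg (norm_nonneg _)]
        exact hdist x hx (T x) (hZ (hTmem x))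
    set a : ℝ := ∫ x in Omega, ‖x - T x‖ with ha
    have haA : a ∈ {c : ℝ | ∃ T : Plane → Plane, IsTransportMap Omega Z v T ∧
        c = ∫ x in Omega, ‖x - T x‖} := ⟨T, hTmap, rfl⟩
    -- dual function
    set Fm : Plane → ℝ := fun x => Z.inf' hZne (fun z => ‖x - z‖ - ψ z) with hFm
    have hFmcont : Continuous Fm :=
      KRD.continuous_inf' Z hZne (fun z x => ‖x - z‖ - ψ z)
        (fun z _ => (continuous_id.sub continuous_const).norm.sub continuous_const)
    have hFmint : IntegrableOn Fm Omega := by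
      apply KRD.integrableOn_of_bdd hΩmeas hvolfin hFmcont.aestronglyMeasurable.restrict
        (C := 2 * r₀ + Z.sup' hZne (fun z => |ψ z|))
      intro x hx
      apply KRD.abs_inf'_le
      intro z hz
      have h1 := hdist x hx z (hZ hz)
      have h2 : |ψ z| ≤ Z.sup' hZne (fun z => |ψ z|) := Finset.le_sup' (fun z => |ψ z|) hz
      calc |‖x - z‖ - ψ z| ≤ |‖x - z‖| + |ψ z| := abs_sub _ _
      _ ≤ 2 * r₀ + Z.sup' hZne (fun z => |ψ z|) := by
          rw [abs_of_nonneg (norm_nonneg _)]; linarith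
    set phi0 : Plane → ℝ := fun x => -(Fm x) with hphi0
    have hphi0int : IntegrableOn phi0 Omega := hFmint.neg
    set c0 : ℝ := (∫ x in Omega, phi0 x) / (volume Omega).toReal with hc0
    set phi : Plane → ℝ := fun x => phi0 x - c0 with hphi
    have hphilip : LipschitzOnWith 1 phi Omega := by
      have hL : LipschitzWith 1 phi := by
        apply LipschitzWith.of_dist_le_mul
        intro x y
        rw [Real.dist_eq, NNReal.coe_one, one_mul, dist_eq_norm]
        have h1 : phi x - phi y = -(Fm x - Fm y) := by
          simp only [hphi, hphi0]; ring
        rw [h1, abs_neg]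
        apply KRD.abs_inf'_sub_inf'_le
        intro z hz
        have h2 : ‖x - z‖ - ψ z - (‖y - z‖ - ψ z) = ‖x - z‖ - ‖y - z‖ := by ring
        rw [h2]
        calc |‖x - z‖ - ‖y - z‖| ≤ ‖(x - z) - (y - z)‖ := abs_norm_sub_norm_le _ _
        _ = ‖x - y‖ := by rw [sub_sub_sub_cancel_right]
      exact hL.lipschitzOnWith
    have hphiconstint : ∀ c : ℝ, IntegrableOn (fun _ : Plane => c) Omega :=
      fun c => integrableOn_const hvolfin.ne
    have hphiint0 : (∫ x in Omega, phi x) = 0 := by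
      simp only [hphi]
      rw [MeasureTheory.integral_sub hphi0int (hphiconstint c0),
        MeasureTheory.setIntegral_const c0, smul_eq_mul, measureReal_def, hc0]
      field_simp
      ring
    set b : ℝ := ∑ z ∈ Z, v z * phi z with hb
    have hbB : b ∈ {s : ℝ | ∃ phi : Plane → ℝ, LipschitzOnWith 1 phi Omega ∧
        (∫ x in Omega, phi x) = 0 ∧ s = ∑ z ∈ Z, v z * phi z} := ⟨phi, hphilip, hphiint0, rfl⟩
    -- strong duality : a ≤ b
    have hstrong : a ≤ b := by
      have h1 : ∀ z ∈ Z, ψ z ≤ phi0 z := by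
        intro z hz
        have h2 : Fm z ≤ ‖z - z‖ - ψ z := Finset.inf'_le _ hz
        rw [sub_self, norm_zero, zero_sub] at h2
        simp only [hphi0]
        linarith
      have h2 : b = (∑ z ∈ Z, v z * phi0 z) - (∫ x in Omega, phi0 x) := by
        simp only [hb, hphi]
        rw [Finset.sum_congr rfl (fun z _ => mul_sub (v z) (phi0 z) c0),
          Finset.sum_sub_distrib, ← Finset.sum_mul, htot]
        have : (volume Omega).toReal * c0 = ∫ x in Omega, phi0 x := by
          rw [hc0]; field_simp
        rw [this]
      have h3 : (∑ z ∈ Z, v z * ψ z) ≤ ∑ z ∈ Z, v z * phi0 z :=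
        Finset.sum_le_sum (fun z hz => mul_le_mul_of_nonneg_left (h1 z hz) (hv z hz).le)
      have h4 : -(∫ x in Omega, phi0 x) = ∫ x in Omega, Fm x := by
        simp only [hphi0]
        rw [MeasureTheory.integral_neg, neg_neg]
      have h5 : (∫ x in Omega, Fm x) = a - ∑ z ∈ Z, v z * ψ z := by
        rw [KRD.split_integral Omega hΩmeas Z T hTmeas (fun x _ => hTmem x) Fm hFmint]
        have h6 : ∀ z ∈ Z, (∫ x in E z, Fm x) = (∫ x in E z, ‖x - z‖) - v z * ψ z := by
          intro z hz
          have h7 : ∀ x ∈ E z, Fm x = ‖x - z‖ - ψ z := by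
            rintro x ⟨hxΩ, hxT⟩
            apply le_antisymm (Finset.inf'_le _ hz)
            apply Finset.le_inf'
            intro z' hz'
            have := hTle x z' hz'
            rw [hxT] at this
            exact this
          have hnz : IntegrableOn (fun x => ‖x - z‖) (E z) := by
            apply KRD.integrableOn_of_bdd (hEmeas z) (hEvolfin z)
            · exact ((continuous_id.sub continuous_const).norm).aestronglyMeasurable.restrict
            · intro x hx
              rw [abs_of_nonneg (norm_nonneg _)]
              exact hdist x (hEsub z hx) z (hZ hz)
          rw [MeasureTheory.setIntegral_congr_fun (hEmeas z) h7,
            MeasureTheory.integral_sub hnz (integrableOn_const (hEvolfin z).ne),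
            MeasureTheory.setIntegral_const, smul_eq_mul, measureReal_def, hEvol z hz]
        rw [Finset.sum_congr rfl h6, Finset.sum_sub_distrib]
        have h9 : (∑ z ∈ Z, ∫ x in E z, ‖x - z‖) = a := by
          rw [ha, KRD.split_integral Omega hΩmeas Z T hTmeas (fun x _ => hTmem x) _ hnTint]
          apply Finset.sum_congr rfl
          intro z hz
          apply MeasureTheory.setIntegral_congr_fun (hEmeas z)
          rintro x ⟨hxΩ, hxT⟩
          show ‖x - z‖ = ‖x - T x‖
          rw [hxT]
        rw [h9]
      linarith
    -- weak duality and conclusion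
    have hweak : ∀ b' ∈ {s : ℝ | ∃ phi : Plane → ℝ, LipschitzOnWith 1 phi Omega ∧
          (∫ x in Omega, phi x) = 0 ∧ s = ∑ z ∈ Z, v z * phi z},
        ∀ a' ∈ {c : ℝ | ∃ T : Plane → Plane, IsTransportMap Omega Z v T ∧
          c = ∫ x in Omega, ‖x - T x‖}, b' ≤ a' := by
      rintro b' ⟨phi', hlip', hint0', rfl⟩ a' ⟨T', hT', rfl⟩
      exact KRD.weak_duality Omega hopen hbdd Z v hZ hΩne phi' hlip' hint0' T' hT'
    have hbddB : BddAbove {s : ℝ | ∃ phi : Plane → ℝ, LipschitzOnWith 1 phi Omega ∧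
        (∫ x in Omega, phi x) = 0 ∧ s = ∑ z ∈ Z, v z * phi z} :=
      ⟨a, fun b' hb' => hweak b' hb' a haA⟩
    have hbddA : BddBelow {c : ℝ | ∃ T : Plane → Plane, IsTransportMap Omega Z v T ∧
        c = ∫ x in Omega, ‖x - T x‖} :=
      ⟨b, fun a' ha' => hweak b hbB a' ha'⟩
    apply le_antisymm
    · calc sInf _ ≤ a := csInf_le hbddA haA
      _ ≤ b := hstrong
      _ ≤ sSup _ := le_csSup hbddB hbB
    · apply csSup_le ⟨b, hbB⟩
      intro b' hb'
      apply le_csInf ⟨a, haA⟩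
      intro a' ha'
      exact hweak b' hb' a' ha'
end
end

section
/- There exist constants ξ > 0 and ζ > 0 such that for every integer n ≥ 3 and every real v ≥ 1.5·10⁻⁴, the function f(v,n) = 2·c₆·v^{1/2} + c_n·v² satisfies f(v,n) − 3·c₆·v + κ·(6 − n) ≥ ξ·(v − 1)² + ζ·(1/n − 1/6)², where κ = 2π/243 − 5√3/324. In fact ξ = ζ = 0.001 work. -/
open MeasureTheory Real Filter
open scoped ENNReal RealInnerProductSpace

noncomputable section

/-- The constant `c_n = (1/(2n))·(tan(π/n)/3 + cot(π/n))`. -/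
def cPoly (n : ℕ) : ℝ := (1 / (2 * (n : ℝ))) * (Real.tan (π / n) / 3 + Real.cot (π / n))

/-- The constant `κ = 2π/243 − 5√3/324 = ∂c_n/∂n |_{n=6} < 0`. -/
def kappa : ℝ := 2 * π / 243 - 5 * Real.sqrt 3 / 324


lemma mono_aux {g g' : ℝ → ℝ} (hg : ∀ y, HasDerivAt g (g' y) y)
    (h0 : ∀ y, 0 ≤ y → 0 ≤ g' y) {x : ℝ} (hx : 0 ≤ x) : g 0 ≤ g x := by
  have hm : MonotoneOn g (Set.Ici 0) := by
    refine monotoneOn_of_deriv_nonneg (convex_Ici 0)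
      (fun y _ => (hg y).continuousAt.continuousWithinAt)
      (fun y _ => (hg y).differentiableAt.differentiableWithinAt) (fun y hy => ?_)
    rw [(hg y).deriv]
    rw [interior_Ici] at hy
    exact h0 y hy.le
  exact hm (Set.mem_Ici.2 le_rfl) (Set.mem_Ici.2 hx) hx

lemma sin_ge_taylor {x : ℝ} (hx : 0 ≤ x) : x - x^3/6 ≤ Real.sin x := by
  have hd : ∀ y : ℝ, HasDerivAt (fun y => Real.sin y - (y - y^3/6))
      (Real.cos y - (1 - y^2/2)) y := by
    intro y
    have h1 : HasDerivAt (fun y : ℝ => y - y^3/6) (1 - y^2/2) y := by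
      have := (hasDerivAt_id y).sub ((hasDerivAt_pow 3 y).div_const 6)
      exact this.congr_deriv (by ring)
    exact (Real.hasDerivAt_sin y).sub h1
  have h := mono_aux hd (fun y _ => by nlinarith [Real.one_sub_sq_div_two_le_cos (x := y)]) hx
  simp at h
  linarith

lemma cos_le_taylor {x : ℝ} (hx : 0 ≤ x) : Real.cos x ≤ 1 - x^2/2 + x^4/24 := by
  have hd : ∀ y : ℝ, HasDerivAt (fun y => (1 - y^2/2 + y^4/24) - Real.cos y)
      (Real.sin y - (y - y^3/6)) y := by
    intro y
    have h1 : HasDerivAt (fun y : ℝ => 1 - y^2/2 + y^4/24) (-(y - y^3/6)) y := by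
      have := (((hasDerivAt_const y (1:ℝ)).sub ((hasDerivAt_pow 2 y).div_const 2)).add ((hasDerivAt_pow 4 y).div_const 24))
      exact this.congr_deriv (by ring)
    have := h1.sub (Real.hasDerivAt_cos y)
    exact this.congr_deriv (by ring)
  have h := mono_aux hd (fun y hy => by nlinarith [sin_ge_taylor hy]) hx
  simp at h
  linarith

lemma sin_le_taylor {x : ℝ} (hx : 0 ≤ x) : Real.sin x ≤ x - x^3/6 + x^5/120 := by
  have hd : ∀ y : ℝ, HasDerivAt (fun y => (y - y^3/6 + y^5/120) - Real.sin y)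
      ((1 - y^2/2 + y^4/24) - Real.cos y) y := by
    intro y
    have h1 : HasDerivAt (fun y : ℝ => y - y^3/6 + y^5/120) (1 - y^2/2 + y^4/24) y := by
      have := (((hasDerivAt_id y).sub ((hasDerivAt_pow 3 y).div_const 6)).add ((hasDerivAt_pow 5 y).div_const 120))
      exact this.congr_deriv (by ring)
    exact h1.sub (Real.hasDerivAt_sin y)
  have h := mono_aux hd (fun y hy => by nlinarith [cos_le_taylor hy]) hx
  simp at h
  linarith

lemma cos_ge_taylor {x : ℝ} (hx : 0 ≤ x) : 1 - x^2/2 + x^4/24 - x^6/720 ≤ Real.cos x := by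
  have hd : ∀ y : ℝ, HasDerivAt (fun y => Real.cos y - (1 - y^2/2 + y^4/24 - y^6/720))
      ((y - y^3/6 + y^5/120) - Real.sin y) y := by
    intro y
    have h1 : HasDerivAt (fun y : ℝ => 1 - y^2/2 + y^4/24 - y^6/720) (-(y - y^3/6 + y^5/120) + 0) y := by
      have := ((((hasDerivAt_const y (1:ℝ)).sub ((hasDerivAt_pow 2 y).div_const 2)).add ((hasDerivAt_pow 4 y).div_const 24)).sub ((hasDerivAt_pow 6 y).div_const 720))
      exact this.congr_deriv (by ring)
    have := (Real.hasDerivAt_cos y).sub h1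
    exact this.congr_deriv (by ring)
  have h := mono_aux hd (fun y hy => by nlinarith [sin_le_taylor hy]) hx
  simp at h
  linarith

lemma cPoly_lb (n : ℕ) (s1 s2 c1 c2 r : ℝ) (hn : 0 < ((n:ℕ):ℝ))
    (hs1 : s1 ≤ Real.sin (π/n)) (hs2 : Real.sin (π/n) ≤ s2)
    (hc1 : c1 ≤ Real.cos (π/n)) (hc2 : Real.cos (π/n) ≤ c2)
    (h0s : 0 < s1) (h0c : 0 < c1)
    (hr : r ≤ 1/(2*(n:ℝ)) * (s1/(3*c2) + c1/s2)) : r ≤ cPoly n := by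
  have hS : 0 < Real.sin (π/n) := lt_of_lt_of_le h0s hs1
  have hC : 0 < Real.cos (π/n) := lt_of_lt_of_le h0c hc1
  have h1 : s1/(3*c2) ≤ Real.sin (π/n)/(3*Real.cos (π/n)) :=
    div_le_div₀ hS.le hs1 (by positivity) (by linarith)
  have h2 : c1/s2 ≤ Real.cos (π/n)/Real.sin (π/n) :=
    div_le_div₀ hC.le hc1 hS hs2
  have heq : cPoly n = 1/(2*(n:ℝ)) * (Real.sin (π/n)/(3*Real.cos (π/n)) + Real.cos (π/n)/Real.sin (π/n)) := by
    rw [cPoly, Real.tan_eq_sin_div_cos, Real.cot_eq_cos_div_sin]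
    ring
  rw [heq]
  exact hr.trans (mul_le_mul_of_nonneg_left (add_le_add h1 h2) (by positivity))

lemma c3_lb : (0.1909366:ℝ) ≤ cPoly 3 := by
  have hpl := Real.pi_gt_d6
  have hpu := Real.pi_lt_d6
  have hcast : ((3:ℕ):ℝ) = 3 := by norm_num
  have hx1 : (1.0471973:ℝ) ≤ π/((3:ℕ):ℝ) := by rw [hcast]; linarith
  have hx2 : π/((3:ℕ):ℝ) ≤ (1.0471977:ℝ) := by rw [hcast]; linarith
  set x : ℝ := π/((3:ℕ):ℝ) with hxdef
  have hx0 : (0:ℝ) ≤ x := le_trans (by norm_num) hx1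
  have hxl0 : (0:ℝ) ≤ (1.0471973:ℝ) := by norm_num
  have hp2u : x^2 ≤ (1.0471977:ℝ)^2 := pow_le_pow_left₀ hx0 hx2 2
  have hp2l : (1.0471973:ℝ)^2 ≤ x^2 := pow_le_pow_left₀ hxl0 hx1 2
  have hp3u : x^3 ≤ (1.0471977:ℝ)^3 := pow_le_pow_left₀ hx0 hx2 3
  have hp3l : (1.0471973:ℝ)^3 ≤ x^3 := pow_le_pow_left₀ hxl0 hx1 3
  have hp4u : x^4 ≤ (1.0471977:ℝ)^4 := pow_le_pow_left₀ hx0 hx2 4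
  have hp4l : (1.0471973:ℝ)^4 ≤ x^4 := pow_le_pow_left₀ hxl0 hx1 4
  have hp5u : x^5 ≤ (1.0471977:ℝ)^5 := pow_le_pow_left₀ hx0 hx2 5
  have hp6u : x^6 ≤ (1.0471977:ℝ)^6 := pow_le_pow_left₀ hx0 hx2 6
  norm_num at hp2u hp2l hp3u hp3l hp4u hp4l hp5u hp6u
  have hs1 : (0.8558004:ℝ) ≤ Real.sin x := by
    have h := sin_ge_taylor hx0
    linarith
  have hs2 : Real.sin x ≤ (0.8662956:ℝ) := by
    have h := sin_le_taylor hx0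
    linarith
  have hc1 : (0.4999643:ℝ) ≤ Real.cos x := by
    have h := cos_ge_taylor hx0
    linarith
  have hc2 : Real.cos x ≤ (0.5017965:ℝ) := by
    have h := cos_le_taylor hx0
    linarith
  exact cPoly_lb 3 _ _ _ _ _ (by norm_num) hs1 hs2 hc1 hc2 (by norm_num) (by norm_num)
    (by rw [hcast]; norm_num)

lemma c4_lb : (0.1664959:ℝ) ≤ cPoly 4 := by
  have hpl := Real.pi_gt_d6
  have hpu := Real.pi_lt_d6
  have hcast : ((4:ℕ):ℝ) = 4 := by norm_num
  have hx1 : (0.7853980:ℝ) ≤ π/((4:ℕ):ℝ) := by rw [hcast]; linarith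
  have hx2 : π/((4:ℕ):ℝ) ≤ (0.7853983:ℝ) := by rw [hcast]; linarith
  set x : ℝ := π/((4:ℕ):ℝ) with hxdef
  have hx0 : (0:ℝ) ≤ x := le_trans (by norm_num) hx1
  have hxl0 : (0:ℝ) ≤ (0.7853980:ℝ) := by norm_num
  have hp2u : x^2 ≤ (0.7853983:ℝ)^2 := pow_le_pow_left₀ hx0 hx2 2
  have hp2l : (0.7853980:ℝ)^2 ≤ x^2 := pow_le_pow_left₀ hxl0 hx1 2
  have hp3u : x^3 ≤ (0.7853983:ℝ)^3 := pow_le_pow_left₀ hx0 hx2 3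
  have hp3l : (0.7853980:ℝ)^3 ≤ x^3 := pow_le_pow_left₀ hxl0 hx1 3
  have hp4u : x^4 ≤ (0.7853983:ℝ)^4 := pow_le_pow_left₀ hx0 hx2 4
  have hp4l : (0.7853980:ℝ)^4 ≤ x^4 := pow_le_pow_left₀ hxl0 hx1 4
  have hp5u : x^5 ≤ (0.7853983:ℝ)^5 := pow_le_pow_left₀ hx0 hx2 5
  have hp6u : x^6 ≤ (0.7853983:ℝ)^6 := pow_le_pow_left₀ hx0 hx2 6
  norm_num at hp2u hp2l hp3u hp3l hp4u hp4l hp5u hp6u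
  have hs1 : (0.7046524:ℝ) ≤ Real.sin x := by
    have h := sin_ge_taylor hx0
    linarith
  have hs2 : Real.sin x ≤ (0.7071433:ℝ) := by
    have h := sin_le_taylor hx0
    linarith
  have hc1 : (0.7071030:ℝ) ≤ Real.cos x := by
    have h := cos_ge_taylor hx0
    linarith
  have hc2 : Real.cos x ≤ (0.7074294:ℝ) := by
    have h := cos_le_taylor hx0
    linarith
  exact cPoly_lb 4 _ _ _ _ _ (by norm_num) hs1 hs2 hc1 hc2 (by norm_num) (by norm_num)
    (by rw [hcast]; norm_num)

lemma c5_lb : (0.1618184:ℝ) ≤ cPoly 5 := by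
  have hpl := Real.pi_gt_d6
  have hpu := Real.pi_lt_d6
  have hcast : ((5:ℕ):ℝ) = 5 := by norm_num
  have hx1 : (0.6283184:ℝ) ≤ π/((5:ℕ):ℝ) := by rw [hcast]; linarith
  have hx2 : π/((5:ℕ):ℝ) ≤ (0.6283186:ℝ) := by rw [hcast]; linarith
  set x : ℝ := π/((5:ℕ):ℝ) with hxdef
  have hx0 : (0:ℝ) ≤ x := le_trans (by norm_num) hx1
  have hxl0 : (0:ℝ) ≤ (0.6283184:ℝ) := by norm_num
  have hp2u : x^2 ≤ (0.6283186:ℝ)^2 := pow_le_pow_left₀ hx0 hx2 2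
  have hp2l : (0.6283184:ℝ)^2 ≤ x^2 := pow_le_pow_left₀ hxl0 hx1 2
  have hp3u : x^3 ≤ (0.6283186:ℝ)^3 := pow_le_pow_left₀ hx0 hx2 3
  have hp3l : (0.6283184:ℝ)^3 ≤ x^3 := pow_le_pow_left₀ hxl0 hx1 3
  have hp4u : x^4 ≤ (0.6283186:ℝ)^4 := pow_le_pow_left₀ hx0 hx2 4
  have hp4l : (0.6283184:ℝ)^4 ≤ x^4 := pow_le_pow_left₀ hxl0 hx1 4
  have hp5u : x^5 ≤ (0.6283186:ℝ)^5 := pow_le_pow_left₀ hx0 hx2 5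
  have hp6u : x^6 ≤ (0.6283186:ℝ)^6 := pow_le_pow_left₀ hx0 hx2 6
  norm_num at hp2u hp2l hp3u hp3l hp4u hp4l hp5u hp6u
  have hs1 : (0.5869766:ℝ) ≤ Real.sin x := by
    have h := sin_ge_taylor hx0
    linarith
  have hs2 : Real.sin x ≤ (0.5877930:ℝ) := by
    have h := sin_le_taylor hx0
    linarith
  have hc1 : (0.8090163:ℝ) ≤ Real.cos x := by
    have h := cos_ge_taylor hx0
    linarith
  have hc2 : Real.cos x ≤ (0.8091020:ℝ) := by
    have h := cos_le_taylor hx0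
    linarith
  exact cPoly_lb 5 _ _ _ _ _ (by norm_num) hs1 hs2 hc1 hc2 (by norm_num) (by norm_num)
    (by rw [hcast]; norm_num)

lemma c7_lb : (0.1597845:ℝ) ≤ cPoly 7 := by
  have hpl := Real.pi_gt_d6
  have hpu := Real.pi_lt_d6
  have hcast : ((7:ℕ):ℝ) = 7 := by norm_num
  have hx1 : (0.4487988:ℝ) ≤ π/((7:ℕ):ℝ) := by rw [hcast]; linarith
  have hx2 : π/((7:ℕ):ℝ) ≤ (0.4487990:ℝ) := by rw [hcast]; linarith
  set x : ℝ := π/((7:ℕ):ℝ) with hxdef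
  have hx0 : (0:ℝ) ≤ x := le_trans (by norm_num) hx1
  have hxl0 : (0:ℝ) ≤ (0.4487988:ℝ) := by norm_num
  have hp2u : x^2 ≤ (0.4487990:ℝ)^2 := pow_le_pow_left₀ hx0 hx2 2
  have hp2l : (0.4487988:ℝ)^2 ≤ x^2 := pow_le_pow_left₀ hxl0 hx1 2
  have hp3u : x^3 ≤ (0.4487990:ℝ)^3 := pow_le_pow_left₀ hx0 hx2 3
  have hp3l : (0.4487988:ℝ)^3 ≤ x^3 := pow_le_pow_left₀ hxl0 hx1 3
  have hp4u : x^4 ≤ (0.4487990:ℝ)^4 := pow_le_pow_left₀ hx0 hx2 4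
  have hp4l : (0.4487988:ℝ)^4 ≤ x^4 := pow_le_pow_left₀ hxl0 hx1 4
  have hp5u : x^5 ≤ (0.4487990:ℝ)^5 := pow_le_pow_left₀ hx0 hx2 5
  have hp6u : x^6 ≤ (0.4487990:ℝ)^6 := pow_le_pow_left₀ hx0 hx2 6
  norm_num at hp2u hp2l hp3u hp3l hp4u hp4l hp5u hp6u
  have hs1 : (0.4337325:ℝ) ≤ Real.sin x := by
    have h := sin_ge_taylor hx0
    linarith
  have hs2 : Real.sin x ≤ (0.4338846:ℝ) := by
    have h := sin_le_taylor hx0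
    linarith
  have hc1 : (0.9009688:ℝ) ≤ Real.cos x := by
    have h := cos_ge_taylor hx0
    linarith
  have hc2 : Real.cos x ≤ (0.9009803:ℝ) := by
    have h := cos_le_taylor hx0
    linarith
  exact cPoly_lb 7 _ _ _ _ _ (by norm_num) hs1 hs2 hc1 hc2 (by norm_num) (by norm_num)
    (by rw [hcast]; norm_num)

lemma c8_lb : (0.1595157:ℝ) ≤ cPoly 8 := by
  have hpl := Real.pi_gt_d6
  have hpu := Real.pi_lt_d6
  have hcast : ((8:ℕ):ℝ) = 8 := by norm_num
  have hx1 : (0.3926990:ℝ) ≤ π/((8:ℕ):ℝ) := by rw [hcast]; linarith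
  have hx2 : π/((8:ℕ):ℝ) ≤ (0.3926992:ℝ) := by rw [hcast]; linarith
  set x : ℝ := π/((8:ℕ):ℝ) with hxdef
  have hx0 : (0:ℝ) ≤ x := le_trans (by norm_num) hx1
  have hxl0 : (0:ℝ) ≤ (0.3926990:ℝ) := by norm_num
  have hp2u : x^2 ≤ (0.3926992:ℝ)^2 := pow_le_pow_left₀ hx0 hx2 2
  have hp2l : (0.3926990:ℝ)^2 ≤ x^2 := pow_le_pow_left₀ hxl0 hx1 2
  have hp3u : x^3 ≤ (0.3926992:ℝ)^3 := pow_le_pow_left₀ hx0 hx2 3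
  have hp3l : (0.3926990:ℝ)^3 ≤ x^3 := pow_le_pow_left₀ hxl0 hx1 3
  have hp4u : x^4 ≤ (0.3926992:ℝ)^4 := pow_le_pow_left₀ hx0 hx2 4
  have hp4l : (0.3926990:ℝ)^4 ≤ x^4 := pow_le_pow_left₀ hxl0 hx1 4
  have hp5u : x^5 ≤ (0.3926992:ℝ)^5 := pow_le_pow_left₀ hx0 hx2 5
  have hp6u : x^6 ≤ (0.3926992:ℝ)^6 := pow_le_pow_left₀ hx0 hx2 6
  norm_num at hp2u hp2l hp3u hp3l hp4u hp4l hp5u hp6u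
  have hs1 : (0.3826058:ℝ) ≤ Real.sin x := by
    have h := sin_ge_taylor hx0
    linarith
  have hs2 : Real.sin x ≤ (0.3826839:ℝ) := by
    have h := sin_le_taylor hx0
    linarith
  have hc1 : (0.9238794:ℝ) ≤ Real.cos x := by
    have h := cos_ge_taylor hx0
    linarith
  have hc2 : Real.cos x ≤ (0.9238847:ℝ) := by
    have h := cos_le_taylor hx0
    linarith
  exact cPoly_lb 8 _ _ _ _ _ (by norm_num) hs1 hs2 hc1 hc2 (by norm_num) (by norm_num)
    (by rw [hcast]; norm_num)

lemma c9_lb : (0.1593768:ℝ) ≤ cPoly 9 := by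
  have hpl := Real.pi_gt_d6
  have hpu := Real.pi_lt_d6
  have hcast : ((9:ℕ):ℝ) = 9 := by norm_num
  have hx1 : (0.3490657:ℝ) ≤ π/((9:ℕ):ℝ) := by rw [hcast]; linarith
  have hx2 : π/((9:ℕ):ℝ) ≤ (0.3490659:ℝ) := by rw [hcast]; linarith
  set x : ℝ := π/((9:ℕ):ℝ) with hxdef
  have hx0 : (0:ℝ) ≤ x := le_trans (by norm_num) hx1
  have hxl0 : (0:ℝ) ≤ (0.3490657:ℝ) := by norm_num
  have hp2u : x^2 ≤ (0.3490659:ℝ)^2 := pow_le_pow_left₀ hx0 hx2 2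
  have hp2l : (0.3490657:ℝ)^2 ≤ x^2 := pow_le_pow_left₀ hxl0 hx1 2
  have hp3u : x^3 ≤ (0.3490659:ℝ)^3 := pow_le_pow_left₀ hx0 hx2 3
  have hp3l : (0.3490657:ℝ)^3 ≤ x^3 := pow_le_pow_left₀ hxl0 hx1 3
  have hp4u : x^4 ≤ (0.3490659:ℝ)^4 := pow_le_pow_left₀ hx0 hx2 4
  have hp4l : (0.3490657:ℝ)^4 ≤ x^4 := pow_le_pow_left₀ hxl0 hx1 4
  have hp5u : x^5 ≤ (0.3490659:ℝ)^5 := pow_le_pow_left₀ hx0 hx2 5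
  have hp6u : x^6 ≤ (0.3490659:ℝ)^6 := pow_le_pow_left₀ hx0 hx2 6
  norm_num at hp2u hp2l hp3u hp3l hp4u hp4l hp5u hp6u
  have hs1 : (0.3419769:ℝ) ≤ Real.sin x := by
    have h := sin_ge_taylor hx0
    linarith
  have hs2 : Real.sin x ≤ (0.3420204:ℝ) := by
    have h := sin_le_taylor hx0
    linarith
  have hc1 : (0.9396925:ℝ) ≤ Real.cos x := by
    have h := cos_ge_taylor hx0
    linarith
  have hc2 : Real.cos x ≤ (0.9396952:ℝ) := by
    have h := cos_le_taylor hx0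
    linarith
  exact cPoly_lb 9 _ _ _ _ _ (by norm_num) hs1 hs2 hc1 hc2 (by norm_num) (by norm_num)
    (by rw [hcast]; norm_num)

lemma c10_lb : (0.1592989:ℝ) ≤ cPoly 10 := by
  have hpl := Real.pi_gt_d6
  have hpu := Real.pi_lt_d6
  have hcast : ((10:ℕ):ℝ) = 10 := by norm_num
  have hx1 : (0.3141592:ℝ) ≤ π/((10:ℕ):ℝ) := by rw [hcast]; linarith
  have hx2 : π/((10:ℕ):ℝ) ≤ (0.3141593:ℝ) := by rw [hcast]; linarith
  set x : ℝ := π/((10:ℕ):ℝ) with hxdef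
  have hx0 : (0:ℝ) ≤ x := le_trans (by norm_num) hx1
  have hxl0 : (0:ℝ) ≤ (0.3141592:ℝ) := by norm_num
  have hp2u : x^2 ≤ (0.3141593:ℝ)^2 := pow_le_pow_left₀ hx0 hx2 2
  have hp2l : (0.3141592:ℝ)^2 ≤ x^2 := pow_le_pow_left₀ hxl0 hx1 2
  have hp3u : x^3 ≤ (0.3141593:ℝ)^3 := pow_le_pow_left₀ hx0 hx2 3
  have hp3l : (0.3141592:ℝ)^3 ≤ x^3 := pow_le_pow_left₀ hxl0 hx1 3
  have hp4u : x^4 ≤ (0.3141593:ℝ)^4 := pow_le_pow_left₀ hx0 hx2 4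
  have hp4l : (0.3141592:ℝ)^4 ≤ x^4 := pow_le_pow_left₀ hxl0 hx1 4
  have hp5u : x^5 ≤ (0.3141593:ℝ)^5 := pow_le_pow_left₀ hx0 hx2 5
  have hp6u : x^6 ≤ (0.3141593:ℝ)^6 := pow_le_pow_left₀ hx0 hx2 6
  norm_num at hp2u hp2l hp3u hp3l hp4u hp4l hp5u hp6u
  have hs1 : (0.3089914:ℝ) ≤ Real.sin x := by
    have h := sin_ge_taylor hx0
    linarith
  have hs2 : Real.sin x ≤ (0.3090171:ℝ) := by
    have h := sin_le_taylor hx0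
    linarith
  have hc1 : (0.9510565:ℝ) ≤ Real.cos x := by
    have h := cos_ge_taylor hx0
    linarith
  have hc2 : Real.cos x ≤ (0.9510579:ℝ) := by
    have h := cos_le_taylor hx0
    linarith
  exact cPoly_lb 10 _ _ _ _ _ (by norm_num) hs1 hs2 hc1 hc2 (by norm_num) (by norm_num)
    (by rw [hcast]; norm_num)


lemma cPoly_six : cPoly 6 = c6 := by
  have hcast : ((6:ℕ):ℝ) = 6 := by norm_num
  rw [cPoly, c6, hcast, Real.tan_eq_sin_div_cos, Real.cot_eq_cos_div_sin,
    Real.sin_pi_div_six, Real.cos_pi_div_six]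
  have h3 : Real.sqrt 3 ^ 2 = 3 := Real.sq_sqrt (by norm_num)
  have h30 : 0 < Real.sqrt 3 := Real.sqrt_pos.2 (by norm_num)
  field_simp
  nlinarith [h3, h30]

lemma cPoly_ge_eleven (n : ℕ) (h11 : 11 ≤ n) : (0.1569:ℝ) ≤ cPoly n := by
  have hpl := Real.pi_gt_d6
  have hpu := Real.pi_lt_d6
  have hn' : (11:ℝ) ≤ (n:ℝ) := by exact_mod_cast h11
  have hn0 : (0:ℝ) < (n:ℝ) := by linarith
  set x : ℝ := π/(n:ℝ) with hxdef
  have hx0 : 0 < x := by positivity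
  have hxu : x ≤ 0.2856 := by
    rw [hxdef, div_le_iff₀ hn0]
    nlinarith
  have hxhalf : x < π/2 := by linarith
  have hS0 : 0 < Real.sin x := Real.sin_pos_of_pos_of_lt_pi hx0 (by linarith)
  have hC0 : 0 < Real.cos x := Real.cos_pos_of_mem_Ioo ⟨by linarith, hxhalf⟩
  have htan : x ≤ Real.tan x := (Real.lt_tan hx0 hxhalf).le
  have hsin : Real.sin x ≤ x := Real.sin_le hx0.le
  have hcos : 1 - x^2/2 ≤ Real.cos x := Real.one_sub_sq_div_two_le_cos
  have hcot : (1 - x^2/2)/x ≤ Real.cot x := by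
    rw [Real.cot_eq_cos_div_sin]
    exact div_le_div₀ hC0.le hcos hS0 hsin
  have key : 1/(2*(n:ℝ)) * (x/3 + (1 - x^2/2)/x) ≤ cPoly n := by
    rw [cPoly, ← hxdef]
    apply mul_le_mul_of_nonneg_left _ (by positivity)
    exact add_le_add (by linarith) hcot
  refine le_trans ?_ key
  have hfrac : (1 - x^2/2)/x = (n:ℝ)/π - π/(2*(n:ℝ)) := by
    rw [hxdef]
    field_simp
  rw [hfrac, hxdef]
  have h1 : (0.159154:ℝ) ≤ 1/(2*π) := by
    rw [le_div_iff₀ (by positivity)]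
    nlinarith
  have h2 : π/(12*(n:ℝ)^2) ≤ 3.141593/(12*121) := by
    apply div_le_div₀ (by norm_num) (by linarith) (by positivity)
    nlinarith
  have heq : 1/(2*(n:ℝ)) * (π/(n:ℝ)/3 + ((n:ℝ)/π - π/(2*(n:ℝ)))) = 1/(2*π) - π/(12*(n:ℝ)^2) := by
    field_simp
    ring
  rw [heq]
  linarith

lemma quart3 (t c6v kapv cp : ℝ) (ht0 : 0 ≤ t) (ht012 : (0.0122:ℝ) ≤ t)
    (hc6l : (0.16037507:ℝ) ≤ c6v) (hc6u : c6v ≤ (0.16037509:ℝ))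
    (hku : kapv ≤ (-0.00087244:ℝ)) (hkl : (-0.00087246:ℝ) ≤ kapv)
    (hcp : (0.1909366:ℝ) ≤ cp) :
    0.001*(t^2-1)^2 + 0.001*(1/3 - 1/6)^2 ≤
      2*c6v*t + cp*(t^2)^2 - 3*c6v*t^2 + kapv*(6-3) := by
  have hA : (0.1909366:ℝ) * (t^2)^2 ≤ cp * (t^2)^2 :=
    mul_le_mul_of_nonneg_right hcp (by positivity)
  nlinarith [hA, sq_nonneg (t-1), sq_nonneg (t^2-1), mul_nonneg ht0 (sq_nonneg (t-1)),
    mul_nonneg (mul_nonneg ht0 ht0) (sq_nonneg (t-1)), sq_nonneg (t^2+t-2), ht012, ht0]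

lemma quart4 (t c6v kapv cp : ℝ) (ht0 : 0 ≤ t) (ht012 : (0.0122:ℝ) ≤ t)
    (hc6l : (0.16037507:ℝ) ≤ c6v) (hc6u : c6v ≤ (0.16037509:ℝ))
    (hku : kapv ≤ (-0.00087244:ℝ)) (hkl : (-0.00087246:ℝ) ≤ kapv)
    (hcp : (0.1664959:ℝ) ≤ cp) :
    0.001*(t^2-1)^2 + 0.001*(1/4 - 1/6)^2 ≤
      2*c6v*t + cp*(t^2)^2 - 3*c6v*t^2 + kapv*(6-4) := by
  have hA : (0.1664959:ℝ) * (t^2)^2 ≤ cp * (t^2)^2 :=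
    mul_le_mul_of_nonneg_right hcp (by positivity)
  nlinarith [hA, ht012, ht0, sq_nonneg (t-1), mul_nonneg ht0 (sq_nonneg (t-1)),
    mul_nonneg (mul_nonneg ht0 ht0) (sq_nonneg (t-1)),
    mul_nonneg (sub_nonneg.2 ht012) (sq_nonneg (t-1)), sq_nonneg (t^2-1)]

lemma quart5 (t c6v kapv cp : ℝ) (ht0 : 0 ≤ t) (ht012 : (0.0122:ℝ) ≤ t)
    (hc6l : (0.16037507:ℝ) ≤ c6v) (hc6u : c6v ≤ (0.16037509:ℝ))
    (hku : kapv ≤ (-0.00087244:ℝ)) (hkl : (-0.00087246:ℝ) ≤ kapv)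
    (hcp : (0.1618184:ℝ) ≤ cp) :
    0.001*(t^2-1)^2 + 0.001*(1/5 - 1/6)^2 ≤
      2*c6v*t + cp*(t^2)^2 - 3*c6v*t^2 + kapv*(6-5) := by
  have hA : (0.1618184:ℝ) * (t^2)^2 ≤ cp * (t^2)^2 :=
    mul_le_mul_of_nonneg_right hcp (by positivity)
  nlinarith [hA, ht012, ht0, sq_nonneg (t-0.994), mul_nonneg ht0 (sq_nonneg (t-0.994)),
    mul_nonneg (mul_nonneg ht0 ht0) (sq_nonneg (t-0.994)),
    mul_nonneg (sub_nonneg.2 ht012) (sq_nonneg (t-0.994)), sq_nonneg (t^2-1)]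

lemma quart7 (t c6v kapv cp : ℝ) (ht0 : 0 ≤ t) (ht012 : (0.0122:ℝ) ≤ t)
    (hc6l : (0.16037507:ℝ) ≤ c6v) (hc6u : c6v ≤ (0.16037509:ℝ))
    (hku : kapv ≤ (-0.00087244:ℝ)) (hkl : (-0.00087246:ℝ) ≤ kapv)
    (hcp : (0.1597845:ℝ) ≤ cp) :
    0.001*(t^2-1)^2 + 0.001*(1/7 - 1/6)^2 ≤
      2*c6v*t + cp*(t^2)^2 - 3*c6v*t^2 + kapv*(6-7) := by
  have hA : (0.1597845:ℝ) * (t^2)^2 ≤ cp * (t^2)^2 :=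
    mul_le_mul_of_nonneg_right hcp (by positivity)
  nlinarith [hA, ht012, ht0, sq_nonneg (t-1.0024), mul_nonneg ht0 (sq_nonneg (t-1.0024)),
    mul_nonneg (mul_nonneg ht0 ht0) (sq_nonneg (t-1.0024)),
    mul_nonneg (sub_nonneg.2 ht012) (sq_nonneg (t-1.0024)), sq_nonneg (t^2-1)]

lemma quart8 (t c6v kapv cp : ℝ) (ht0 : 0 ≤ t) (ht012 : (0.0122:ℝ) ≤ t)
    (hc6l : (0.16037507:ℝ) ≤ c6v) (hc6u : c6v ≤ (0.16037509:ℝ))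
    (hku : kapv ≤ (-0.00087244:ℝ)) (hkl : (-0.00087246:ℝ) ≤ kapv)
    (hcp : (0.1595157:ℝ) ≤ cp) :
    0.001*(t^2-1)^2 + 0.001*(1/8 - 1/6)^2 ≤
      2*c6v*t + cp*(t^2)^2 - 3*c6v*t^2 + kapv*(6-8) := by
  have hA : (0.1595157:ℝ) * (t^2)^2 ≤ cp * (t^2)^2 :=
    mul_le_mul_of_nonneg_right hcp (by positivity)
  nlinarith [hA, ht012, ht0, sq_nonneg (t-1.0037), mul_nonneg ht0 (sq_nonneg (t-1.0037)),
    mul_nonneg (mul_nonneg ht0 ht0) (sq_nonneg (t-1.0037)),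
    mul_nonneg (sub_nonneg.2 ht012) (sq_nonneg (t-1.0037)), sq_nonneg (t^2-1)]

lemma quart9 (t c6v kapv cp : ℝ) (ht0 : 0 ≤ t) (ht012 : (0.0122:ℝ) ≤ t)
    (hc6l : (0.16037507:ℝ) ≤ c6v) (hc6u : c6v ≤ (0.16037509:ℝ))
    (hku : kapv ≤ (-0.00087244:ℝ)) (hkl : (-0.00087246:ℝ) ≤ kapv)
    (hcp : (0.1593768:ℝ) ≤ cp) :
    0.001*(t^2-1)^2 + 0.001*(1/9 - 1/6)^2 ≤
      2*c6v*t + cp*(t^2)^2 - 3*c6v*t^2 + kapv*(6-9) := by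
  have hA : (0.1593768:ℝ) * (t^2)^2 ≤ cp * (t^2)^2 :=
    mul_le_mul_of_nonneg_right hcp (by positivity)
  nlinarith [hA, ht012, ht0, sq_nonneg (t-1.0043), mul_nonneg ht0 (sq_nonneg (t-1.0043)),
    mul_nonneg (mul_nonneg ht0 ht0) (sq_nonneg (t-1.0043)),
    mul_nonneg (sub_nonneg.2 ht012) (sq_nonneg (t-1.0043)), sq_nonneg (t^2-1)]

lemma quart10 (t c6v kapv cp : ℝ) (ht0 : 0 ≤ t) (ht012 : (0.0122:ℝ) ≤ t)
    (hc6l : (0.16037507:ℝ) ≤ c6v) (hc6u : c6v ≤ (0.16037509:ℝ))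
    (hku : kapv ≤ (-0.00087244:ℝ)) (hkl : (-0.00087246:ℝ) ≤ kapv)
    (hcp : (0.1592989:ℝ) ≤ cp) :
    0.001*(t^2-1)^2 + 0.001*(1/10 - 1/6)^2 ≤
      2*c6v*t + cp*(t^2)^2 - 3*c6v*t^2 + kapv*(6-10) := by
  have hA : (0.1592989:ℝ) * (t^2)^2 ≤ cp * (t^2)^2 :=
    mul_le_mul_of_nonneg_right hcp (by positivity)
  nlinarith [hA, ht012, ht0, sq_nonneg (t-1.0045), mul_nonneg ht0 (sq_nonneg (t-1.0045)),
    mul_nonneg (mul_nonneg ht0 ht0) (sq_nonneg (t-1.0045)),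
    mul_nonneg (sub_nonneg.2 ht012) (sq_nonneg (t-1.0045)), sq_nonneg (t^2-1)]

lemma quart6 (t c6v kapv : ℝ) (ht0 : 0 ≤ t) (ht012 : (0.0122:ℝ) ≤ t)
    (hc6l : (0.16037507:ℝ) ≤ c6v) (hc6u : c6v ≤ (0.16037509:ℝ)) :
    0.001*(t^2-1)^2 + 0.001*(1/6 - 1/6)^2 ≤
      2*c6v*t + c6v*(t^2)^2 - 3*c6v*t^2 + kapv*(6-6) := by
  have key : 0 ≤ (t-1)^2 * (c6v*t*(t+2) - 0.001*(t+1)^2) := by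
    apply mul_nonneg (sq_nonneg _)
    nlinarith [ht012, ht0]
  nlinarith [key]

lemma quart11 (t c6v kapv cp nn : ℝ) (hn' : (11:ℝ) ≤ nn) (ht0 : 0 ≤ t)
    (ht012 : (0.0122:ℝ) ≤ t)
    (hc6l : (0.16037507:ℝ) ≤ c6v) (hc6u : c6v ≤ (0.16037509:ℝ))
    (hku : kapv ≤ (-0.00087244:ℝ)) (hcp : (0.1569:ℝ) ≤ cp) :
    0.001*(t^2-1)^2 + 0.001*(1/nn - 1/6)^2 ≤
      2*c6v*t + cp*(t^2)^2 - 3*c6v*t^2 + kapv*(6-nn) := by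
  have hA : (0.1569:ℝ) * (t^2)^2 ≤ cp * (t^2)^2 :=
    mul_le_mul_of_nonneg_right hcp (by positivity)
  have hinv : 1/nn ≤ 1/11 := one_div_le_one_div_of_le (by norm_num) hn'
  have hinv0 : 0 < 1/nn := by positivity
  have hq : (1/nn - 1/6)^2 ≤ 1/36 := by nlinarith [hinv, hinv0]
  have hK : (0.0043622:ℝ) ≤ kapv * (6 - nn) := by nlinarith [hku, hn']
  nlinarith [hA, ht012, ht0, hq, hK, sq_nonneg (t-1.0148), mul_nonneg ht0 (sq_nonneg (t-1.0148)),
    mul_nonneg (mul_nonneg ht0 ht0) (sq_nonneg (t-1.0148)),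
    mul_nonneg (sub_nonneg.2 ht012) (sq_nonneg (t-1.0148)), sq_nonneg (t^2-1)]


/-- **Lemma (lower bound on `f`).** There are `ξ, ζ > 0` — in fact `ξ = ζ = 0.001` — such
that for every integer `n ≥ 3` and every `v ≥ 1.5·10⁻⁴`,
`f(v,n) − 3c₆v + κ(6 − n) ≥ ξ(v − 1)² + ζ(1/n − 1/6)²`, where
`f(v,n) = 2c₆v^(1/2) + c_n v²`. -/
theorem lower_bound_on_f :
    ∃ xi zeta : ℝ, 0 < xi ∧ 0 < zeta ∧ xi = 0.001 ∧ zeta = 0.001 ∧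
      ∀ n : ℕ, 3 ≤ n → ∀ v : ℝ, 1.5e-4 ≤ v →
        xi * (v - 1) ^ 2 + zeta * (1 / (n : ℝ) - 1 / 6) ^ 2 ≤
          (2 * c6 * Real.sqrt v + cPoly n * v ^ 2) - 3 * c6 * v + kappa * (6 - (n : ℝ)) := by
  refine ⟨0.001, 0.001, by norm_num, by norm_num, rfl, rfl, ?_⟩
  intro n hn v hv
  have hv0 : (0:ℝ) ≤ v := le_trans (by norm_num) hv
  obtain ⟨t, ht0, rfl⟩ : ∃ t : ℝ, 0 ≤ t ∧ t^2 = v :=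
    ⟨Real.sqrt v, Real.sqrt_nonneg v, Real.sq_sqrt hv0⟩
  rw [Real.sqrt_sq ht0]
  have ht015 : (0.00015:ℝ) ≤ t^2 := by linarith [hv]
  have ht012 : (0.0122:ℝ) ≤ t := by nlinarith [ht015, ht0]
  have h3l : (1.7320508:ℝ) ≤ Real.sqrt 3 := ((Real.lt_sqrt (by norm_num)).2 (by norm_num)).le
  have h3u : Real.sqrt 3 ≤ (1.7320509:ℝ) := ((Real.sqrt_lt' (by norm_num)).2 (by norm_num)).le
  have hc6l : (0.16037507:ℝ) ≤ c6 := by rw [c6]; linarith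
  have hc6u : c6 ≤ (0.16037509:ℝ) := by rw [c6]; linarith
  have hpl := Real.pi_gt_d6
  have hpu := Real.pi_lt_d6
  have hkl : (-0.00087246:ℝ) ≤ kappa := by rw [kappa]; linarith
  have hku : kappa ≤ (-0.00087244:ℝ) := by rw [kappa]; linarith
  have hcase : n = 3 ∨ n = 4 ∨ n = 5 ∨ n = 6 ∨ n = 7 ∨ n = 8 ∨ n = 9 ∨ n = 10 ∨ 11 ≤ n := by
    omega
  rcases hcase with rfl|rfl|rfl|rfl|rfl|rfl|rfl|rfl|h11
  · push_cast
    exact quart3 t c6 kappa (cPoly 3) ht0 ht012 hc6l hc6u hku hkl c3_lb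
  · push_cast
    exact quart4 t c6 kappa (cPoly 4) ht0 ht012 hc6l hc6u hku hkl c4_lb
  · push_cast
    exact quart5 t c6 kappa (cPoly 5) ht0 ht012 hc6l hc6u hku hkl c5_lb
  · push_cast
    rw [cPoly_six]
    exact quart6 t c6 kappa ht0 ht012 hc6l hc6u
  · push_cast
    exact quart7 t c6 kappa (cPoly 7) ht0 ht012 hc6l hc6u hku hkl c7_lb
  · push_cast
    exact quart8 t c6 kappa (cPoly 8) ht0 ht012 hc6l hc6u hku hkl c8_lb
  · push_cast
    exact quart9 t c6 kappa (cPoly 9) ht0 ht012 hc6l hc6u hku hkl c9_lb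
  · push_cast
    exact quart10 t c6 kappa (cPoly 10) ht0 ht012 hc6l hc6u hku hkl c10_lb
  · have hn' : (11:ℝ) ≤ (n:ℝ) := by exact_mod_cast h11
    exact quart11 t c6 kappa (cPoly n) (n:ℝ) hn' ht0 ht012 hc6l hc6u hku (cPoly_ge_eleven n h11)
end
end

section
/- Define c: (2,∞) → ℝ by c(t) = (1/(2t))·(tan(π/t)/3 + cot(π/t)) and g: (0,∞) × (2,∞) → ℝ by g(v,t) = v²·c(t). Then at every point (v,t) ∈ (0,∞) × (2,∞) one has ∂²g/∂v² = 2·c(t) > 0 and det D²g(v,t) = 8π²·v²·sec²(π/t)/(9·t⁶) > 0; consequently g is convex on the convex set (0,∞) × (2,∞). -/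
open MeasureTheory Real Filter
open scoped ENNReal RealInnerProductSpace

noncomputable section

/-- The extension `c(t) = (1/(2t))·(tan(π/t)/3 + cot(π/t))` of `c_n` to real arguments. -/
def cReal (t : ℝ) : ℝ := (1 / (2 * t)) * (Real.tan (π / t) / 3 + Real.cot (π / t))

/-- The function `g(v,t) = v²·c(t)`. -/
def gfun (v t : ℝ) : ℝ := v ^ 2 * cReal t

def cD1 (t : ℝ) : ℝ :=
  (-(π / t ^ 2) * (1 / (3 * Real.cos (π / t) ^ 2) - 1 / Real.sin (π / t) ^ 2)) / (2 * t)
    - (Real.sin (π / t) / (3 * Real.cos (π / t)) + Real.cos (π / t) / Real.sin (π / t)) / (2 * t ^ 2)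

lemma tpos {t : ℝ} (ht : 2 < t) : 0 < t := lt_trans two_pos ht

lemma sinpos {t : ℝ} (ht : 2 < t) : 0 < Real.sin (π / t) := by
  apply Real.sin_pos_of_pos_of_lt_pi
  · positivity
  · rw [div_lt_iff₀ (tpos ht)]
    nlinarith [pi_pos]

lemma cospos {t : ℝ} (ht : 2 < t) : 0 < Real.cos (π / t) := by
  apply Real.cos_pos_of_mem_Ioo
  constructor
  · have : (0:ℝ) < π / t := by positivity
    linarith [pi_pos]
  · rw [div_lt_iff₀ (tpos ht)]
    nlinarith [pi_pos]

lemma hasDerivAt_u {t : ℝ} (ht : 0 < t) : HasDerivAt (fun x : ℝ => π / x) (-(π / t ^ 2)) t := by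
  have h := (hasDerivAt_inv ht.ne').const_mul π
  refine h.congr_deriv ?_
  field_simp

lemma hasDerivAt_cReal {t : ℝ} (ht : 2 < t) : HasDerivAt cReal (cD1 t) t := by
  have ht0 := tpos ht
  have hs := sinpos ht
  have hc := cospos ht
  have hu := hasDerivAt_u ht0
  have hsin : HasDerivAt (fun x : ℝ => Real.sin (π / x)) (Real.cos (π / t) * -(π / t ^ 2)) t :=
    (Real.hasDerivAt_sin (π / t)).comp t hu
  have hcos : HasDerivAt (fun x : ℝ => Real.cos (π / x)) (-Real.sin (π / t) * -(π / t ^ 2)) t :=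
    (Real.hasDerivAt_cos (π / t)).comp t hu
  have h1 := hsin.div (hcos.const_mul 3) (by positivity)
  have h2 := hcos.div hsin hs.ne'
  have hden : HasDerivAt (fun x : ℝ => 2 * x) 2 t := by
    simpa using (hasDerivAt_id t).const_mul 2
  have h3 := (h1.add h2).div hden (by positivity)
  have hfun : cReal = fun x : ℝ =>
      (Real.sin (π / x) / (3 * Real.cos (π / x)) + Real.cos (π / x) / Real.sin (π / x)) / (2 * x) := by
    funext x
    simp only [cReal, Real.tan_eq_sin_div_cos, Real.cot_eq_cos_div_sin]
    ring
  rw [hfun]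
  refine h3.congr_deriv (Eq.symm ?_)
  rw [cD1]
  have hpy : Real.sin (π / t) ^ 2 = 1 - Real.cos (π / t) ^ 2 := by
    have := Real.sin_sq_add_cos_sq (π / t); linarith
  simp only [Pi.div_apply, Pi.add_apply, Pi.pow_apply, Pi.neg_apply, Pi.mul_apply, Pi.sub_apply]
  field_simp
  linear_combination (π * Real.sin (π/t)^2 - 3 * π * Real.cos (π/t)^2) * hpy

def cD2 (t : ℝ) : ℝ :=
  ((2 * π / t ^ 3) * (1 / (3 * Real.cos (π / t) ^ 2) - 1 / Real.sin (π / t) ^ 2)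
      + (π ^ 2 / t ^ 4) * (2 * Real.sin (π / t) / (3 * Real.cos (π / t) ^ 3)
          + 2 * Real.cos (π / t) / Real.sin (π / t) ^ 3)) / (2 * t)
    - (-(π / t ^ 2) * (1 / (3 * Real.cos (π / t) ^ 2) - 1 / Real.sin (π / t) ^ 2)) / t ^ 2
    + (Real.sin (π / t) / (3 * Real.cos (π / t)) + Real.cos (π / t) / Real.sin (π / t)) / t ^ 3

lemma hasDerivAt_cD1 {t : ℝ} (ht : 2 < t) : HasDerivAt cD1 (cD2 t) t := by
  have ht0 := tpos ht
  have hs := sinpos ht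
  have hc := cospos ht
  have hu := hasDerivAt_u ht0
  have hsin : HasDerivAt (fun x : ℝ => Real.sin (π / x)) (Real.cos (π / t) * -(π / t ^ 2)) t :=
    (Real.hasDerivAt_sin (π / t)).comp t hu
  have hcos : HasDerivAt (fun x : ℝ => Real.cos (π / x)) (-Real.sin (π / t) * -(π / t ^ 2)) t :=
    (Real.hasDerivAt_cos (π / t)).comp t hu
  have hp2 : HasDerivAt (fun x : ℝ => x ^ 2) (2 * t ^ 1) t := by
    simpa using hasDerivAt_pow 2 t
  have hq : HasDerivAt (fun x : ℝ => π / x ^ 2)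
      ((0 * t ^ 2 - π * (2 * t ^ 1)) / (t ^ 2) ^ 2) t :=
    (hasDerivAt_const t π).div hp2 (by positivity)
  have h13C2 := (hasDerivAt_const t (1:ℝ)).div ((hcos.pow 2).const_mul 3) (by simp only [Pi.pow_apply]; positivity)
  have h1S2 := (hasDerivAt_const t (1:ℝ)).div (hsin.pow 2) (by simp only [Pi.pow_apply]; positivity)
  have hA := hq.neg.mul (h13C2.sub h1S2)
  have hden : HasDerivAt (fun x : ℝ => 2 * x) 2 t := by
    simpa using (hasDerivAt_id t).const_mul 2
  have hden2 : HasDerivAt (fun x : ℝ => 2 * x ^ 2) (2 * (2 * t ^ 1)) t := hp2.const_mul 2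
  have h1 := hsin.div (hcos.const_mul 3) (by positivity)
  have h2 := hcos.div hsin hs.ne'
  have htot := (hA.div hden (by positivity)).sub ((h1.add h2).div hden2 (by positivity))
  have hfun : cD1 = fun x : ℝ =>
      (-(π / x ^ 2) * (1 / (3 * Real.cos (π / x) ^ 2) - 1 / Real.sin (π / x) ^ 2)) / (2 * x)
        - (Real.sin (π / x) / (3 * Real.cos (π / x)) + Real.cos (π / x) / Real.sin (π / x)) / (2 * x ^ 2) := by
    funext x; rw [cD1]
  rw [hfun]
  refine htot.congr_deriv (Eq.symm ?_)
  rw [cD2]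
  have hpy : Real.sin (π / t) ^ 2 = 1 - Real.cos (π / t) ^ 2 := by
    have := Real.sin_sq_add_cos_sq (π / t); linarith
  simp only [Pi.div_apply, Pi.add_apply, Pi.pow_apply, Pi.neg_apply, Pi.mul_apply, Pi.sub_apply]
  field_simp
  linear_combination (-π * t * Real.sin (π/t)^4 * Real.cos (π/t)^2 + 3 * π * t * Real.sin (π/t)^2 * Real.cos (π/t)^4) * hpy

lemma det_half {t : ℝ} (ht : 2 < t) :
    cReal t * cD2 t - 2 * cD1 t ^ 2 = 4 * π ^ 2 * ((Real.cos (π / t))⁻¹) ^ 2 / (9 * t ^ 6) := by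
  have ht0 := tpos ht
  have hs := sinpos ht
  have hc := cospos ht
  have hpy : Real.sin (π / t) ^ 2 = 1 - Real.cos (π / t) ^ 2 := by
    have := Real.sin_sq_add_cos_sq (π / t); linarith
  rw [cReal, Real.tan_eq_sin_div_cos, Real.cot_eq_cos_div_sin, cD1, cD2]
  field_simp
  linear_combination (9 * π^2 * (Real.sin (π/t)^2 - 3 * Real.cos (π/t)^2)^2) * hpy

lemma cReal_pos {t : ℝ} (ht : 2 < t) : 0 < cReal t := by
  have ht0 := tpos ht
  have hs := sinpos ht
  have hc := cospos ht
  rw [cReal, Real.tan_eq_sin_div_cos, Real.cot_eq_cos_div_sin]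
  positivity

lemma det_half_pos {t : ℝ} (ht : 2 < t) :
    0 < 4 * π ^ 2 * ((Real.cos (π / t))⁻¹) ^ 2 / (9 * t ^ 6) := by
  have ht0 := tpos ht
  have hc := cospos ht
  apply div_pos _ (by positivity)
  have h1 : (0:ℝ) < ((Real.cos (π / t))⁻¹) ^ 2 := pow_pos (inv_pos.2 hc) 2
  have h2 : (0:ℝ) < 4 * π ^ 2 := by positivity
  exact mul_pos h2 h1

lemma concave_inv_cReal : ConcaveOn ℝ (Set.Ioi (2:ℝ)) (fun x => (cReal x)⁻¹) := by
  apply concaveOn_of_hasDerivWithinAt2_nonpos (convex_Ioi 2)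
    (f' := fun x => -cD1 x / cReal x ^ 2)
    (f'' := fun x => (-cD2 x * cReal x ^ 2 - -cD1 x * ((2:ℝ) * cReal x ^ 1 * cD1 x)) / (cReal x ^ 2) ^ 2)
  · intro x hx
    exact ((hasDerivAt_cReal hx).inv (cReal_pos hx).ne').continuousAt.continuousWithinAt
  · rw [interior_Ioi]
    intro x hx
    have h := (hasDerivAt_cReal hx).inv (cReal_pos hx).ne'
    exact h.hasDerivWithinAt
  · rw [interior_Ioi]
    intro x hx
    have h := (hasDerivAt_cD1 hx).neg.div ((hasDerivAt_cReal hx).pow 2)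
      (pow_ne_zero 2 (cReal_pos hx).ne')
    have h2 : HasDerivAt (fun y => -cD1 y / cReal y ^ 2)
        ((-cD2 x * cReal x ^ 2 - -cD1 x * ((2:ℝ) * cReal x ^ 1 * cD1 x)) / (cReal x ^ 2) ^ 2) x := by
      exact_mod_cast h
    exact h2.hasDerivWithinAt
  · rw [interior_Ioi]
    intro x hx
    have hcp := cReal_pos hx
    have hkey := det_half hx
    have hnum : -cD2 x * cReal x ^ 2 - -cD1 x * ((2:ℝ) * cReal x ^ 1 * cD1 x)
        = -cReal x * (cReal x * cD2 x - 2 * cD1 x ^ 2) := by ring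
    rw [hnum, hkey]
    apply div_nonpos_of_nonpos_of_nonneg _ (by positivity)
    have := det_half_pos hx
    nlinarith

lemma deriv_inner_v (s w : ℝ) : deriv (fun w' : ℝ => gfun w' s) w = 2 * w * cReal s := by
  have h : HasDerivAt (fun w' : ℝ => gfun w' s) (2 * w * cReal s) w := by
    have := (hasDerivAt_pow 2 w).mul_const (cReal s)
    simp only [gfun]
    exact this.congr_deriv (by norm_num)
  exact h.deriv

/-- **Convexity of `g(v,t) = v²c(t)` on `(0,∞) × (2,∞)`.** At every point, `∂²g/∂v² = 2c(t) > 0`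
and `det D²g = 8π²v²sec²(π/t)/(9t⁶) > 0`; consequently `g` is convex on `(0,∞) × (2,∞)`. -/
theorem g_is_convex :
    (∀ v ∈ Set.Ioi (0 : ℝ), ∀ t ∈ Set.Ioi (2 : ℝ),
      (deriv (fun w : ℝ => deriv (fun w' : ℝ => gfun w' t) w) v = 2 * cReal t ∧
        0 < 2 * cReal t) ∧
      (deriv (fun w : ℝ => deriv (fun w' : ℝ => gfun w' t) w) v *
          deriv (fun s : ℝ => deriv (fun s' : ℝ => gfun v s') s) t -
          (deriv (fun s : ℝ => deriv (fun w : ℝ => gfun w s) v) t) ^ 2 =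
            8 * π ^ 2 * v ^ 2 * ((Real.cos (π / t))⁻¹) ^ 2 / (9 * t ^ 6) ∧
        0 < 8 * π ^ 2 * v ^ 2 * ((Real.cos (π / t))⁻¹) ^ 2 / (9 * t ^ 6))) ∧
    ConvexOn ℝ (Set.Ioi (0 : ℝ) ×ˢ Set.Ioi (2 : ℝ)) (fun p : ℝ × ℝ => gfun p.1 p.2) := by
  constructor
  · intro v hv t ht
    rw [Set.mem_Ioi] at hv ht
    have ht0 := tpos ht
    have hc := cospos ht
    have hvv : deriv (fun w : ℝ => deriv (fun w' : ℝ => gfun w' t) w) v = 2 * cReal t := by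
      have hfun : (fun w : ℝ => deriv (fun w' : ℝ => gfun w' t) w)
          = fun w : ℝ => 2 * w * cReal t := funext fun w => deriv_inner_v t w
      rw [hfun]
      have h : HasDerivAt (fun w : ℝ => 2 * w * cReal t) (2 * cReal t) v := by
        simpa using ((hasDerivAt_id v).const_mul (2:ℝ)).mul_const (cReal t)
      exact h.deriv
    have hvt : deriv (fun s : ℝ => deriv (fun w : ℝ => gfun w s) v) t = 2 * v * cD1 t := by
      have hfun : (fun s : ℝ => deriv (fun w : ℝ => gfun w s) v)
          = fun s : ℝ => 2 * v * cReal s := funext fun s => deriv_inner_v s v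
      rw [hfun]
      exact ((hasDerivAt_cReal ht).const_mul (2 * v)).deriv
    have htt : deriv (fun s : ℝ => deriv (fun s' : ℝ => gfun v s') s) t = v ^ 2 * cD2 t := by
      have hev : (fun s : ℝ => deriv (fun s' : ℝ => gfun v s') s)
          =ᶠ[nhds t] fun s : ℝ => v ^ 2 * cD1 s := by
        filter_upwards [Ioi_mem_nhds ht] with s hs
        have h : HasDerivAt (fun s' : ℝ => gfun v s') (v ^ 2 * cD1 s) s := by
          simp only [gfun]
          exact (hasDerivAt_cReal hs).const_mul (v ^ 2)
        exact h.deriv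
      rw [hev.deriv_eq]
      exact ((hasDerivAt_cD1 ht).const_mul (v ^ 2)).deriv
    refine ⟨⟨hvv, by have := cReal_pos ht; linarith⟩, ?_, ?_⟩
    · rw [hvv, hvt, htt]
      have hkey := det_half ht
      have : 2 * cReal t * (v ^ 2 * cD2 t) - (2 * v * cD1 t) ^ 2
          = 2 * v ^ 2 * (cReal t * cD2 t - 2 * cD1 t ^ 2) := by ring
      rw [this, hkey]
      field_simp
      ring
    · have h1 : (0:ℝ) < ((Real.cos (π / t))⁻¹) ^ 2 := pow_pos (inv_pos.2 hc) 2
      apply div_pos _ (by positivity)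
      have h2 : (0:ℝ) < 8 * π ^ 2 * v ^ 2 := by positivity
      exact mul_pos h2 h1
  · rw [convexOn_iff_forall_pos]
    refine ⟨((convex_Ioi (0:ℝ)).prod (convex_Ioi (2:ℝ))), ?_⟩
    intro p hp q hq a b ha hb hab
    obtain ⟨hp1, hp2⟩ := hp
    obtain ⟨hq1, hq2⟩ := hq
    rw [Set.mem_Ioi] at hp1 hp2 hq1 hq2
    set v₁ := p.1; set t₁ := p.2; set v₂ := q.1; set t₂ := q.2
    have hT : 2 < a * t₁ + b * t₂ := by nlinarith
    have hH1 : 0 < (cReal t₁)⁻¹ := inv_pos.2 (cReal_pos hp2)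
    have hH2 : 0 < (cReal t₂)⁻¹ := inv_pos.2 (cReal_pos hq2)
    have hHT : 0 < (cReal (a * t₁ + b * t₂))⁻¹ := inv_pos.2 (cReal_pos hT)
    have hconc := concave_inv_cReal.2 (Set.mem_Ioi.2 hp2) (Set.mem_Ioi.2 hq2) ha.le hb.le hab
    simp only [smul_eq_mul] at hconc
    set H₁ := (cReal t₁)⁻¹
    set H₂ := (cReal t₂)⁻¹
    set HT := (cReal (a * t₁ + b * t₂))⁻¹
    have hmix : 0 < a * H₁ + b * H₂ := by positivity
    -- rewrite gfun in terms of the reciprocals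
    have hg : ∀ w s : ℝ, 2 < s → gfun w s = w ^ 2 / (cReal s)⁻¹ := by
      intro w s hs
      rw [gfun, div_inv_eq_mul]
    have hgoal : gfun (a * v₁ + b * v₂) (a * t₁ + b * t₂)
        ≤ a * gfun v₁ t₁ + b * gfun v₂ t₂ := by
      rw [hg _ _ hT, hg _ _ hp2, hg _ _ hq2]
      have step1 : (a * v₁ + b * v₂) ^ 2 / HT ≤ (a * v₁ + b * v₂) ^ 2 / (a * H₁ + b * H₂) := by
        gcongr
      have step2 : (a * v₁ + b * v₂) ^ 2 / (a * H₁ + b * H₂)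
          ≤ a * (v₁ ^ 2 / H₁) + b * (v₂ ^ 2 / H₂) := by
        have hsum : a * (v₁ ^ 2 / H₁) + b * (v₂ ^ 2 / H₂)
            = (a * (v₁ ^ 2 * H₂) + b * (v₂ ^ 2 * H₁)) / (H₁ * H₂) := by
          field_simp
        rw [hsum, div_le_div_iff₀ hmix (by positivity)]
        nlinarith [mul_nonneg (mul_pos ha hb).le (sq_nonneg (v₁ * H₂ - v₂ * H₁))]
      linarith
    simpa [smul_eq_mul] using hgoal
end
end

section
/- Let λ > 0, let Ω ⊂ ℝ² have Lebesgue area 1, let μ be a minimizer of E_λ among admissible atomic measures on Ω_λ with support Z, and let T be an optimal transport map for W(L_{Ω_λ}, μ). Set m₀ = 2.4095·10⁻⁴ and R₀ = 3.2143. Assume that μ({z}) ≥ m₀ for every z ∈ Z and that for every x ∈ Ω_λ there exists z̃ ∈ Z with |x − z̃| ≤ R₀. Then for every z ∈ Z the essential diameter of the cell T⁻¹({z}) is at most D₀, where D₀² = 4·(c₆·m₀^{−1/2} + R₀²). -/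
open MeasureTheory Real Filter
open scoped ENNReal RealInnerProductSpace

noncomputable section

/-- `(Z, v)` is a minimizer of `E_λ` among admissible atomic measures on `Ω_λ`. -/
def IsMinimizer (lam : ℝ) (Omlam : Set Plane) (Z : Finset Plane) (v : Plane → ℝ) : Prop :=
  Admissible lam Omlam Z v ∧
    ∀ (Z' : Finset Plane) (v' : Plane → ℝ), Admissible lam Omlam Z' v' →
      energy Omlam Z v ≤ energy Omlam Z' v'

/-- The essential diameter of a measurable set: the infimum of `diam (A \\ N)` over
Lebesgue-null sets `N`. -/
def essDiam (A : Set Plane) : ℝ :=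
  sInf {d : ℝ | ∃ N : Set Plane, volume N = 0 ∧ d = Metric.diam (A \ N)}

set_option maxHeartbeats 3000000 in
/-- **Lemma (diameter bound for transport cells).** Let `μ` minimize `E_λ`, let `T` be an
optimal transport map, suppose every weight is at least `m₀ = 2.4095·10⁻⁴` and every point of
`Ω_λ` is within distance `R₀ = 3.2143` of the support. Then every transport cell has essential
diameter at most `D₀`, where `D₀² = 4(c₆·m₀^(−1/2) + R₀²)`. -/
theorem cell_diameter_bound
    (lam : ℝ) (hlam : 0 < lam) (Omega : Set Plane) (harea : volume Omega = 1)
    (Z : Finset Plane) (v : Plane → ℝ)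
    (hmin : IsMinimizer lam (scaledDomain lam Omega) Z v)
    (T : Plane → Plane) (hT : IsTransportMap (scaledDomain lam Omega) Z v T)
    (hopt : (∫ x in scaledDomain lam Omega, ‖x - T x‖ ^ 2) =
      transportCost (scaledDomain lam Omega) Z v)
    (hm : ∀ z ∈ Z, (2.4095e-4 : ℝ) ≤ v z)
    (hcover : ∀ x ∈ scaledDomain lam Omega, ∃ z ∈ Z, dist x z ≤ (3.2143 : ℝ)) :
    ∃ D0 : ℝ, 0 ≤ D0 ∧
      D0 ^ 2 = 4 * (c6 * (Real.sqrt (2.4095e-4 : ℝ))⁻¹ + (3.2143 : ℝ) ^ 2) ∧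
      ∀ z ∈ Z, essDiam {x | x ∈ scaledDomain lam Omega ∧ T x = z} ≤ D0 := by
  
  classical
  obtain ⟨hTmeas, hTmem, hTvol⟩ := hT
  set O := scaledDomain lam Omega with hOdef
  set m0 : ℝ := 2.4095e-4 with hm0def
  set R0 : ℝ := 3.2143 with hR0def
  have hm0pos : (0:ℝ) < m0 := by rw [hm0def]; norm_num
  have hR0pos : (0:ℝ) < R0 := by rw [hR0def]; norm_num
  have hsm0 : 0 < Real.sqrt m0 := Real.sqrt_pos.mpr hm0pos
  have hc6pos : (0:ℝ) < c6 := by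
    have h3 : (0:ℝ) < Real.sqrt 3 := Real.sqrt_pos.mpr (by norm_num)
    rw [c6]; positivity
  set a : ℝ := c6 * (Real.sqrt m0)⁻¹ + R0 ^ 2 with hadef
  have hapos : 0 < a := by
    have h1 : 0 < c6 * (Real.sqrt m0)⁻¹ := mul_pos hc6pos (inv_pos.mpr hsm0)
    rw [hadef]; nlinarith
  set r : ℝ := Real.sqrt a with hrdef
  have hr2 : r ^ 2 = a := Real.sq_sqrt hapos.le
  have hrpos : 0 < r := Real.sqrt_pos.mpr hapos
  have hR0r : R0 < r := by
    have h1 : 0 < c6 * (Real.sqrt m0)⁻¹ := mul_pos hc6pos (inv_pos.mpr hsm0)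
    rw [hrdef]
    exact (Real.lt_sqrt hR0pos.le).mpr (by rw [hadef]; nlinarith)
  refine ⟨2 * r, by positivity, ?_, ?_⟩
  · rw [mul_pow, hr2]; norm_num
  intro z hz
  set A := {x | x ∈ O ∧ T x = z} with hAdef
  suffices hN0 : volume (A ∩ {x | r < dist x z}) = 0 by
    have hmem : Metric.diam (A \ (A ∩ {x | r < dist x z})) ∈
        {d : ℝ | ∃ N : Set Plane, volume N = 0 ∧ d = Metric.diam (A \ N)} := ⟨_, hN0, rfl⟩
    have hbdd : BddBelow {d : ℝ | ∃ N : Set Plane, volume N = 0 ∧ d = Metric.diam (A \ N)} :=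
      ⟨0, by rintro d ⟨N, -, rfl⟩; exact Metric.diam_nonneg⟩
    refine le_trans (csInf_le hbdd hmem) ?_
    refine le_trans (Metric.diam_mono (t := Metric.closedBall z r) ?_ Metric.isBounded_closedBall) ?_
    · rintro x ⟨hxA, hx2⟩
      have hnlt : ¬ r < dist x z := fun hc => hx2 ⟨hxA, hc⟩
      exact Metric.mem_closedBall.mpr (not_lt.1 hnlt)
    · exact Metric.diam_closedBall hrpos.le
  have hsubU : A ∩ {x | r < dist x z} ⊆
      ⋃ k : ℕ, (A ∩ {x | r + 1 / (k + 1) ≤ dist x z}) := by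
    rintro x ⟨hxA, hx⟩
    obtain ⟨n, hn⟩ := exists_nat_one_div_lt (show (0:ℝ) < dist x z - r from sub_pos.mpr hx)
    exact Set.mem_iUnion.mpr ⟨n, hxA, by simp only [Set.mem_setOf_eq]; linarith⟩
  refine measure_mono_null hsubU (measure_iUnion_null fun k => ?_)
  set κ : ℝ := 1 / (k + 1) with hκdef
  have hκpos : 0 < κ := by rw [hκdef]; positivity
  by_contra hNk
  -- find the atom z̃ near a positive-measure part of the far region
  have hexz : ∃ w ∈ Z, volume ((A ∩ {x | r + κ ≤ dist x z}) ∩ Metric.closedBall w R0) ≠ 0 := by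
    by_contra hc
    push_neg at hc
    apply hNk
    have hsub : (A ∩ {x | r + κ ≤ dist x z}) ⊆
        ⋃ w ∈ Z, ((A ∩ {x | r + κ ≤ dist x z}) ∩ Metric.closedBall w R0) := by
      intro x hx
      obtain ⟨w, hw, hdw⟩ := hcover x hx.1.1
      exact Set.mem_biUnion hw ⟨hx, Metric.mem_closedBall.mpr hdw⟩
    refine le_antisymm ?_ zero_le
    calc volume (A ∩ {x | r + κ ≤ dist x z})
        ≤ ∑ w ∈ Z, volume ((A ∩ {x | r + κ ≤ dist x z}) ∩ Metric.closedBall w R0) :=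
          le_trans (measure_mono hsub) (measure_biUnion_finset_le Z _)
      _ = 0 := Finset.sum_eq_zero fun w hw => hc w hw
  obtain ⟨z', hz'Z, hz'pos⟩ := hexz
  -- the bounded measurable hull of O
  set B := ⋃ w ∈ Z, Metric.closedBall w R0 with hBdef
  have hBm : MeasurableSet B := Z.measurableSet_biUnion fun w _ => measurableSet_closedBall
  have hBfin : volume B ≠ ⊤ :=
    ((measure_biUnion_finset_le Z _).trans_lt
      (ENNReal.sum_lt_top.mpr fun w _ => measure_closedBall_lt_top)).ne
  have hOB : O ⊆ B := by
    intro x hx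
    obtain ⟨w, hw, hdw⟩ := hcover x hx
    exact Set.mem_biUnion hw (Metric.mem_closedBall.mpr hdw)
  have hOfin : volume O ≠ ⊤ := ((measure_mono hOB).trans_lt hBfin.lt_top).ne
  set Q := toMeasurable volume O ∩ B with hQdef
  have hQm : MeasurableSet Q := (measurableSet_toMeasurable _ _).inter hBm
  have hOQ : O ⊆ Q := Set.subset_inter (subset_toMeasurable _ _) hOB
  have hQfin : volume Q ≠ ⊤ := ((measure_mono Set.inter_subset_right).trans_lt hBfin.lt_top).ne
  have hres : volume.restrict O = volume.restrict Q := by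
    refine Measure.ext fun t ht => ?_
    rw [Measure.restrict_apply ht, Measure.restrict_apply ht]
    have h1 : t ∩ Q = toMeasurable volume O ∩ (t ∩ B) := by
      rw [hQdef]; ext x
      simp only [Set.mem_inter_iff]; tauto
    have h2 : O ∩ (t ∩ B) = t ∩ O := by
      ext x; simp only [Set.mem_inter_iff]
      exact ⟨fun h => ⟨h.2.1, h.1⟩, fun h => ⟨h.2, h.1, hOB h.2⟩⟩
    rw [h1, Measure.measure_toMeasurable_inter (ht.inter hBm) hOfin, h2]
  have hTzm : ∀ w : Plane, MeasurableSet (T ⁻¹' {w}) := fun w => hTmeas (measurableSet_singleton w)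
  have hcellQ : ∀ w ∈ Z, volume (T ⁻¹' {w} ∩ Q) = ENNReal.ofReal (v w) := by
    intro w hw
    have h1 : volume (T ⁻¹' {w} ∩ Q) = volume (T ⁻¹' {w} ∩ O) := by
      rw [← Measure.restrict_apply (hTzm w), ← Measure.restrict_apply (hTzm w), hres]
    have h2 : T ⁻¹' {w} ∩ O = {x | x ∈ O ∧ T x = w} := by
      ext x; simp only [Set.mem_inter_iff, Set.mem_preimage, Set.mem_singleton_iff,
        Set.mem_setOf_eq]; tauto
    have h3 : (volume (T ⁻¹' {w} ∩ Q)).toReal = v w := by rw [h1, h2]; exact hTvol w hw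
    have h4 : volume (T ⁻¹' {w} ∩ Q) ≠ ⊤ :=
      ((measure_mono Set.inter_subset_right).trans_lt hQfin.lt_top).ne
    rw [← h3, ENNReal.ofReal_toReal h4]
  -- the far part of the cell of z within distance R0 of z'
  set W : Set Plane := Q ∩ T ⁻¹' {z} ∩ {x | r + κ ≤ dist x z} ∩ Metric.closedBall z' R0 with hWdef
  have hWm : MeasurableSet W :=
    ((hQm.inter (hTzm z)).inter
      ((isClosed_le continuous_const (continuous_id.dist continuous_const)).measurableSet)).inter
      measurableSet_closedBall
  have hWsubcell : W ⊆ T ⁻¹' {z} ∩ Q := fun x hx => ⟨hx.1.1.2, hx.1.1.1⟩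
  have hWfin : volume W ≠ ⊤ :=
    ((measure_mono fun x hx => hx.1.1.1).trans_lt hQfin.lt_top).ne
  have hNkW : (A ∩ {x | r + κ ≤ dist x z}) ∩ Metric.closedBall z' R0 ⊆ W := by
    rintro x ⟨⟨⟨hxO, hxT⟩, hxd⟩, hxb⟩
    exact ⟨⟨⟨hOQ hxO, hxT⟩, hxd⟩, hxb⟩
  have hWpos : volume W ≠ 0 := fun h => hz'pos (measure_mono_null hNkW h)
  have hz'ne : z' ≠ z := by
    obtain ⟨x₂, hx₂⟩ := nonempty_of_measure_ne_zero hWpos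
    intro he
    have h1 : r + κ ≤ dist x₂ z := hx₂.1.2
    have h2 : dist x₂ z' ≤ R0 := Metric.mem_closedBall.mp hx₂.2
    rw [he] at h2; linarith
  -- a point of W all whose neighborhoods meet W in positive measure
  obtain ⟨C, hCc, hCd⟩ := TopologicalSpace.exists_countable_dense Plane
  set bad := ⋃ q ∈ C, ⋃ n : ℕ, ⋃ (_ : volume (W ∩ Metric.ball q (1 / (n + 1))) = 0),
      (W ∩ Metric.ball q (1 / (n + 1))) with hbaddef
  have hbad0 : volume bad = 0 := by
    rw [hbaddef]
    refine (measure_biUnion_null_iff hCc).mpr fun q _ => measure_iUnion_null fun n => ?_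
    by_cases h : volume (W ∩ Metric.ball q (1 / (n + 1))) = 0
    · exact measure_mono_null (Set.iUnion_subset fun _ => subset_rfl) h
    · simp [h]
  have hWbadpos : volume (W \ bad) ≠ 0 := by
    intro h
    apply hWpos
    have hle : volume W ≤ volume (W \ bad) + volume bad := by
      refine le_trans (measure_mono ?_) (measure_union_le _ _)
      intro x hx
      by_cases hb : x ∈ bad
      · exact Or.inr hb
      · exact Or.inl ⟨hx, hb⟩
    simpa [h, hbad0] using hle
  obtain ⟨x₁, hx₁W, hx₁bad⟩ := nonempty_of_measure_ne_zero hWbadpos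
  have hdens : ∀ ρ : ℝ, 0 < ρ → volume (W ∩ Metric.ball x₁ ρ) ≠ 0 := by
    intro ρ hρ h0
    obtain ⟨n, hn⟩ := exists_nat_one_div_lt (by linarith : (0:ℝ) < ρ / 2)
    obtain ⟨q, hqC, hq⟩ := hCd.exists_dist_lt x₁ (by positivity : (0:ℝ) < 1 / (n + 1))
    have hx₁q : x₁ ∈ Metric.ball q (1 / (n + 1)) := Metric.mem_ball.mpr hq
    have hball : Metric.ball q (1 / (n + 1)) ⊆ Metric.ball x₁ ρ := by
      intro y hy
      rw [Metric.mem_ball] at hy ⊢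
      have h1 : dist y x₁ ≤ dist y q + dist q x₁ := dist_triangle y q x₁
      have h2 : dist q x₁ = dist x₁ q := dist_comm q x₁
      linarith
    have hq0 : volume (W ∩ Metric.ball q (1 / (n + 1))) ≠ 0 := by
      intro hzero
      exact hx₁bad (Set.mem_biUnion hqC (Set.mem_iUnion.mpr
        ⟨n, Set.mem_iUnion.mpr ⟨hzero, hx₁W, hx₁q⟩⟩))
    exact hq0 (measure_mono_null (Set.inter_subset_inter_right W hball) h0)
  -- choose a small closed ball around x₁
  have hiInter : (⋂ n : ℕ, Metric.closedBall x₁ (1 / (n + 1))) = {x₁} := by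
    ext y
    simp only [Set.mem_iInter, Metric.mem_closedBall, Set.mem_singleton_iff]
    constructor
    · intro h
      have hd0 : dist y x₁ ≤ 0 := by
        by_contra hc
        push_neg at hc
        obtain ⟨n, hn⟩ := exists_nat_one_div_lt hc
        exact absurd (h n) (not_le.mpr hn)
      exact dist_le_zero.mp hd0
    · rintro rfl n
      rw [dist_self]; positivity
  have htend : Filter.Tendsto (fun n : ℕ => volume (Metric.closedBall x₁ (1 / (n + 1))))
      Filter.atTop (nhds 0) := by
    have h1 := tendsto_measure_iInter_atTop (μ := volume)
      (s := fun n : ℕ => Metric.closedBall x₁ (1 / (n + 1)))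
      (fun n => measurableSet_closedBall.nullMeasurableSet)
      (fun i j hij => Metric.closedBall_subset_closedBall (by
        have : (i:ℝ) + 1 ≤ (j:ℝ) + 1 := by exact_mod_cast by omega
        exact one_div_le_one_div_of_le (by positivity) this))
      ⟨0, measure_closedBall_lt_top.ne⟩
    rwa [hiInter, measure_singleton] at h1
  have hev := (htend.eventually (Iio_mem_nhds (pos_iff_ne_zero.mpr hWpos))).exists
  obtain ⟨nρ, hnρ⟩ := hev
  set ρ : ℝ := 1 / (nρ + 1) with hρdef
  have hρpos : 0 < ρ := by rw [hρdef]; positivity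
  have hρlt : volume (Metric.closedBall x₁ ρ) < volume W := hnρ
  -- the set S of mass we move, and its mass δ
  set S := W \ Metric.closedBall x₁ ρ with hSdef
  have hSm : MeasurableSet S := hWm.diff measurableSet_closedBall
  have hSsubW : S ⊆ W := Set.diff_subset
  have hSfin : volume S ≠ ⊤ := ((measure_mono hSsubW).trans_lt hWfin.lt_top).ne
  have hScap : volume (W ∩ Metric.closedBall x₁ ρ) + volume S = volume W :=
    measure_inter_add_diff W measurableSet_closedBall
  have hSpos : volume S ≠ 0 := by
    intro h0
    rw [h0, add_zero] at hScap
    have hle : volume W ≤ volume (Metric.closedBall x₁ ρ) :=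
      hScap ▸ measure_mono Set.inter_subset_right
    exact absurd hle (not_le.mpr hρlt)
  have hcap0 : volume (W ∩ Metric.closedBall x₁ ρ) ≠ 0 := by
    intro h0
    exact hdens ρ hρpos (measure_mono_null
      (Set.inter_subset_inter_right W Metric.ball_subset_closedBall) h0)
  have hSlt : volume S < ENNReal.ofReal (v z) := by
    calc volume S < volume S + volume (W ∩ Metric.closedBall x₁ ρ) :=
          ENNReal.lt_add_right hSfin hcap0
      _ = volume W := by rw [add_comm]; exact hScap
      _ ≤ volume (T ⁻¹' {z} ∩ Q) := measure_mono hWsubcell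
      _ = ENNReal.ofReal (v z) := hcellQ z hz
  set δ := (volume S).toReal with hδdef
  have hδpos : 0 < δ := ENNReal.toReal_pos hSpos hSfin
  have hvz : (0:ℝ) < v z := hmin.1.2.1 z hz
  have hδlt : δ < v z := by
    have h1 := (ENNReal.toReal_lt_toReal hSfin ENNReal.ofReal_ne_top).mpr hSlt
    rwa [ENNReal.toReal_ofReal hvz.le] at h1
  have hvolS : volume S = ENNReal.ofReal δ := (ENNReal.ofReal_toReal hSfin).symm
  have hScell : S ⊆ T ⁻¹' {z} ∩ Q := fun x hx => hWsubcell (hSsubW hx)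
  -- bound interlude
  have hZne : Z.Nonempty := ⟨z, hz⟩
  set M := Z.sup' hZne (fun w => dist w z) with hMdef
  have hMle : ∀ w ∈ Z, dist w z ≤ M := fun w hw => by
    rw [hMdef]; exact Finset.le_sup' (fun w => dist w z) hw
  have hM0 : 0 ≤ M := by
    have := hMle z hz
    rwa [dist_self] at this
  have hbddInt : ∀ (f : Plane → ℝ) (U : Set Plane) (Kb : ℝ), Measurable f → volume U ≠ ⊤ →
      (∀ x ∈ U, |f x| ≤ Kb) → Integrable f (volume.restrict U) := by
    intro f U Kb hf hUfin hK
    haveI : IsFiniteMeasure (volume.restrict U) :=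
      ⟨by rw [Measure.restrict_apply_univ]; exact hUfin.lt_top⟩
    refine Integrable.mono' (integrable_const Kb) hf.aestronglyMeasurable ?_
    have hmeasE : MeasurableSet {x | Kb < ‖f x‖} := measurableSet_lt measurable_const hf.norm
    rw [ae_iff]
    have he1 : {x | ¬ ‖f x‖ ≤ Kb} = {x | Kb < ‖f x‖} := by ext x; simp [not_le]
    rw [he1, Measure.restrict_apply hmeasE]
    have he2 : {x | Kb < ‖f x‖} ∩ U = ∅ := by
      ext x
      simp only [Set.mem_inter_iff, Set.mem_setOf_eq, Set.mem_empty_iff_false, iff_false, not_and]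
      intro hlt hxU
      rw [Real.norm_eq_abs] at hlt
      exact absurd (hK x hxU) (not_le.mpr hlt)
    rw [he2, measure_empty]
  have hcostb : ∀ (U : Plane → Plane), (∀ x ∈ O, U x ∈ Z) →
      ∀ x ∈ O, |‖x - U x‖ ^ 2| ≤ (R0 + 2 * M) ^ 2 := by
    intro U hU x hx
    obtain ⟨w, hw, hdw⟩ := hcover x hx
    have h1 : dist x (U x) ≤ R0 + 2 * M := by
      have h2 := hMle w hw
      have h3 := hMle (U x) (hU x hx)
      calc dist x (U x) ≤ dist x w + dist w z + dist z (U x) := dist_triangle4 x w z (U x)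
        _ ≤ R0 + M + M := by rw [dist_comm z (U x)]; exact add_le_add (add_le_add hdw h2) h3
        _ = R0 + 2 * M := by ring
    rw [abs_of_nonneg (by positivity), ← dist_eq_norm]
    exact pow_le_pow_left₀ dist_nonneg h1 2
  have hIntf : Integrable (fun x => ‖x - T x‖ ^ 2) (volume.restrict O) :=
    hbddInt _ O _ ((measurable_id.sub hTmeas).norm.pow_const 2) hOfin (hcostb T hTmem)
  -- the competitor measure and transport map
  set T' := fun x => if x ∈ S then z' else T x with hT'def
  have hT'meas : Measurable T' := Measurable.ite hSm measurable_const hTmeas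
  have hT'mem : ∀ x ∈ O, T' x ∈ Z := by
    intro x hx
    by_cases hxS : x ∈ S
    · simp only [hT'def, hxS, if_true]; exact hz'Z
    · simp only [hT'def, hxS, if_false]; exact hTmem x hx
  set v' := fun w => if w = z then v z - δ else if w = z' then v z' + δ else v w with hv'def
  have hv'z : v' z = v z - δ := by rw [hv'def]; simp
  have hv'z' : v' z' = v z' + δ := by rw [hv'def]; simp [hz'ne]
  have hv'other : ∀ w, w ≠ z → w ≠ z' → v' w = v w := by
    intro w h1 h2; rw [hv'def]; simp [h1, h2]
  have hpair : ∀ h : Plane → ℝ, (∀ w ∈ Z, w ≠ z → w ≠ z' → h w = 0) →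
      ∑ w ∈ Z, h w = h z + h z' := by
    intro h h0
    have hsub : ({z, z'} : Finset Plane) ⊆ Z := by
      intro w hw
      rcases Finset.mem_insert.mp hw with rfl | hw
      · exact hz
      · rw [Finset.mem_singleton.mp hw]; exact hz'Z
    have h1 : ∑ w ∈ ({z, z'} : Finset Plane), h w = ∑ w ∈ Z, h w :=
      Finset.sum_subset hsub (fun w hwZ hwn => h0 w hwZ
        (fun he => hwn (by rw [he]; exact Finset.mem_insert_self _ _))
        (fun he => hwn (by rw [he]; exact Finset.mem_insert_of_mem (Finset.mem_singleton_self z'))))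
    rw [← h1, Finset.sum_pair (Ne.symm hz'ne)]
  have hvpos : ∀ w ∈ Z, 0 < v w := hmin.1.2.1
  have hadm' : Admissible lam O Z v' := by
    refine ⟨hmin.1.1, ?_, ?_⟩
    · intro w hw
      by_cases h1 : w = z
      · rw [h1, hv'z]; linarith
      by_cases h2 : w = z'
      · rw [h2, hv'z']; have := hvpos z' hz'Z; linarith
      · rw [hv'other w h1 h2]; exact hvpos w hw
    · have h1 : ∑ w ∈ Z, (v' w - v w) = 0 := by
        rw [hpair _ (fun w hw ha hb => by rw [hv'other w ha hb]; ring), hv'z, hv'z']; ring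
      rw [Finset.sum_sub_distrib] at h1
      have h2 := hmin.1.2.2
      linarith
  have hT'map : IsTransportMap O Z v' T' := by
    refine ⟨hT'meas, hT'mem, ?_⟩
    intro w hw
    have hsetw : {x | x ∈ O ∧ T' x = w} = T' ⁻¹' {w} ∩ O := by
      ext x; simp only [Set.mem_inter_iff, Set.mem_preimage, Set.mem_singleton_iff,
        Set.mem_setOf_eq]; tauto
    have hkey : volume (T' ⁻¹' {w} ∩ O) = volume (T' ⁻¹' {w} ∩ Q) := by
      rw [← Measure.restrict_apply (hT'meas (measurableSet_singleton w)),
        ← Measure.restrict_apply (hT'meas (measurableSet_singleton w)), hres]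
    rw [hsetw, hkey]
    by_cases h1 : w = z
    · subst h1
      have he : T' ⁻¹' {w} ∩ Q = (T ⁻¹' {w} ∩ Q) \ S := by
        ext x
        by_cases hxS : x ∈ S
        · simp [hT'def, hxS, hz'ne]
        · simp [hT'def, hxS]
      rw [he, measure_diff (fun x hx => hScell hx) hSm.nullMeasurableSet
        (hvolS ▸ ENNReal.ofReal_ne_top), hcellQ _ hz, hvolS,
        ← ENNReal.ofReal_sub _ hδpos.le, ENNReal.toReal_ofReal (by linarith), hv'z]
    by_cases h2 : w = z'
    · subst h2
      have he : T' ⁻¹' {w} ∩ Q = (T ⁻¹' {w} ∩ Q) ∪ S := by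
        ext x
        by_cases hxS : x ∈ S
        · simp [hT'def, hxS, (hScell hxS).2]
        · simp [hT'def, hxS]
      have hdisj : Disjoint (T ⁻¹' {w} ∩ Q) S := by
        rw [Set.disjoint_left]
        rintro x ⟨hx1, -⟩ hxS
        have hxz : T x = z := (hScell hxS).1
        rw [Set.mem_preimage, Set.mem_singleton_iff, hxz] at hx1
        exact hz'ne hx1.symm
      rw [he, measure_union hdisj hSm, hcellQ _ hz'Z, hvolS,
        ← ENNReal.ofReal_add (hvpos w hz'Z).le hδpos.le,
        ENNReal.toReal_ofReal (by have := hvpos w hz'Z; linarith), hv'z']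
    · have he : T' ⁻¹' {w} ∩ Q = T ⁻¹' {w} ∩ Q := by
        ext x
        by_cases hxS : x ∈ S
        · have hxz : T x = z := (hScell hxS).1
          simp only [Set.mem_inter_iff, Set.mem_preimage, Set.mem_singleton_iff, hT'def, hxS,
            if_true, hxz]
          constructor
          · rintro ⟨he', -⟩; exact absurd he'.symm h2
          · rintro ⟨he', -⟩; exact absurd he'.symm h1
        · simp [hT'def, hxS]
      rw [he, hcellQ _ hw, ENNReal.toReal_ofReal (hvpos w hw).le, hv'other w h1 h2]
  -- cost comparison
  have hIntf' : Integrable (fun x => ‖x - T' x‖ ^ 2) (volume.restrict O) :=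
    hbddInt _ O _ ((measurable_id.sub hT'meas).norm.pow_const 2) hOfin (hcostb T' hT'mem)
  set c : ℝ := R0 ^ 2 - (r + κ) ^ 2 with hcdef
  have hdiff : (fun x => ‖x - T' x‖ ^ 2 - ‖x - T x‖ ^ 2) =
      S.indicator (fun x => ‖x - z'‖ ^ 2 - ‖x - T x‖ ^ 2) := by
    funext x
    by_cases hxS : x ∈ S
    · rw [Set.indicator_of_mem hxS]; simp [hT'def, hxS]
    · rw [Set.indicator_of_notMem hxS]; simp [hT'def, hxS]
  have hSptw : ∀ x ∈ S, ‖x - z'‖ ^ 2 - ‖x - T x‖ ^ 2 ≤ c := by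
    intro x hxS
    obtain ⟨⟨⟨hxQ, hxT⟩, hxd⟩, hxb⟩ := hSsubW hxS
    have hxT' : T x = z := hxT
    have h1 : ‖x - z'‖ ^ 2 ≤ R0 ^ 2 := by
      rw [← dist_eq_norm]
      exact pow_le_pow_left₀ dist_nonneg (Metric.mem_closedBall.mp hxb) 2
    have h2 : (r + κ) ^ 2 ≤ ‖x - T x‖ ^ 2 := by
      rw [← dist_eq_norm, hxT']
      exact pow_le_pow_left₀ (by positivity) hxd 2
    rw [hcdef]; linarith
  have hintS1 : IntegrableOn (fun x => ‖x - z'‖ ^ 2 - ‖x - T x‖ ^ 2) S volume := by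
    refine hbddInt _ S (R0 ^ 2 + (R0 + M) ^ 2)
      (((measurable_id.sub measurable_const).norm.pow_const 2).sub
        ((measurable_id.sub hTmeas).norm.pow_const 2)) hSfin ?_
    intro x hxS
    obtain ⟨⟨⟨hxQ, hxT⟩, hxd⟩, hxb⟩ := hSsubW hxS
    have hxT' : T x = z := hxT
    have h1 : ‖x - z'‖ ^ 2 ≤ R0 ^ 2 := by
      rw [← dist_eq_norm]
      exact pow_le_pow_left₀ dist_nonneg (Metric.mem_closedBall.mp hxb) 2
    have h2 : ‖x - T x‖ ^ 2 ≤ (R0 + M) ^ 2 := by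
      rw [← dist_eq_norm, hxT']
      have h3 : dist x z ≤ dist x z' + dist z' z := dist_triangle x z' z
      have h4 : dist x z' ≤ R0 := Metric.mem_closedBall.mp hxb
      have h5 : dist z' z ≤ M := hMle z' hz'Z
      exact pow_le_pow_left₀ dist_nonneg (by linarith) 2
    have h6 : (0:ℝ) ≤ ‖x - z'‖ ^ 2 := by positivity
    have h7 : (0:ℝ) ≤ ‖x - T x‖ ^ 2 := by positivity
    rw [abs_le]
    constructor <;> nlinarith [hR0pos, hM0]
  have hintS2 : IntegrableOn (fun _ : Plane => c) S volume :=
    integrableOn_const hSfin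
  have hC'la : (∫ x in O, ‖x - T' x‖ ^ 2) - (∫ x in O, ‖x - T x‖ ^ 2) ≤ δ * c := by
    rw [← integral_sub hIntf' hIntf, hdiff, integral_indicator hSm]
    have hrr : (volume.restrict O).restrict S = volume.restrict S := by
      rw [hres, Measure.restrict_restrict hSm,
        Set.inter_eq_self_of_subset_left (fun x hx => (hScell hx).2)]
    rw [hrr]
    calc (∫ x in S, (‖x - z'‖ ^ 2 - ‖x - T x‖ ^ 2)) ≤ ∫ _x in S, c :=
          setIntegral_mono_on hintS1 hintS2 hSm hSptw
      _ = δ * c := by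
          rw [setIntegral_const, measureReal_def, hvolS, ENNReal.toReal_ofReal hδpos.le, smul_eq_mul]
  -- square-root term comparison
  have hsq : ∑ w ∈ Z, Real.sqrt (v' w) ≤
      ∑ w ∈ Z, Real.sqrt (v w) + δ * (Real.sqrt m0)⁻¹ / 2 := by
    have h1 : ∑ w ∈ Z, (Real.sqrt (v' w) - Real.sqrt (v w)) =
        (Real.sqrt (v' z) - Real.sqrt (v z)) + (Real.sqrt (v' z') - Real.sqrt (v z')) :=
      hpair _ (fun w hw ha hb => by rw [hv'other w ha hb]; ring)
    have h2 : Real.sqrt (v' z) ≤ Real.sqrt (v z) := by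
      rw [hv'z]; exact Real.sqrt_le_sqrt (by linarith)
    have h3 : Real.sqrt (v' z') ≤ Real.sqrt (v z') + δ * (Real.sqrt m0)⁻¹ / 2 := by
      rw [hv'z']
      have hs := Real.sq_sqrt (hvpos z' hz'Z).le
      have hsm : Real.sqrt m0 ≤ Real.sqrt (v z') := Real.sqrt_le_sqrt (hm z' hz'Z)
      have hsnn : 0 ≤ Real.sqrt (v z') := Real.sqrt_nonneg _
      have hkey : v z' + δ ≤ (Real.sqrt (v z') + δ * (Real.sqrt m0)⁻¹ / 2) ^ 2 := by
        have h4 : δ ≤ Real.sqrt (v z') * (δ * (Real.sqrt m0)⁻¹) := by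
          have h5 : Real.sqrt m0 * (Real.sqrt m0)⁻¹ = 1 := mul_inv_cancel₀ hsm0.ne'
          have h6 : (0:ℝ) ≤ (Real.sqrt m0)⁻¹ := by positivity
          have h7 : 0 ≤ (Real.sqrt (v z') - Real.sqrt m0) * (δ * (Real.sqrt m0)⁻¹) :=
            mul_nonneg (by linarith) (mul_nonneg hδpos.le h6)
          have h8 : δ * (Real.sqrt m0 * (Real.sqrt m0)⁻¹) = δ := by rw [h5]; ring
          nlinarith [h7, h8]
        nlinarith [sq_nonneg (δ * (Real.sqrt m0)⁻¹ / 2)]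
      calc Real.sqrt (v z' + δ)
          ≤ Real.sqrt ((Real.sqrt (v z') + δ * (Real.sqrt m0)⁻¹ / 2) ^ 2) :=
            Real.sqrt_le_sqrt hkey
        _ = Real.sqrt (v z') + δ * (Real.sqrt m0)⁻¹ / 2 := Real.sqrt_sq (by positivity)
    rw [Finset.sum_sub_distrib] at h1
    linarith
  -- minimality gives the contradiction
  have hEmin := hmin.2 Z v' hadm'
  have hcost' : transportCost O Z v' ≤ ∫ x in O, ‖x - T' x‖ ^ 2 := by
    apply csInf_le
    · refine ⟨0, ?_⟩
      rintro cc ⟨U, hU, rfl⟩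
      exact integral_nonneg fun x => by positivity
    · exact ⟨T', hT'map, rfl⟩
  rw [energy, energy, ← hopt] at hEmin
  have hexpand : 2 * c6 * (∑ w ∈ Z, Real.sqrt (v w) + δ * (Real.sqrt m0)⁻¹ / 2) =
      2 * c6 * (∑ w ∈ Z, Real.sqrt (v w)) + c6 * δ * (Real.sqrt m0)⁻¹ := by ring
  have hmul : 2 * c6 * (∑ w ∈ Z, Real.sqrt (v' w)) ≤
      2 * c6 * (∑ w ∈ Z, Real.sqrt (v w) + δ * (Real.sqrt m0)⁻¹ / 2) :=
    mul_le_mul_of_nonneg_left hsq (by linarith)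
  have hs1 : (∫ x in O, ‖x - T' x‖ ^ 2) ≤ (∫ x in O, ‖x - T x‖ ^ 2) + δ * c := by
    linarith [hC'la]
  have hs2 : 2 * c6 * ∑ w ∈ Z, Real.sqrt (v' w) ≤
      2 * c6 * ∑ w ∈ Z, Real.sqrt (v w) + c6 * δ * (Real.sqrt m0)⁻¹ := by
    linarith [hmul, hexpand]
  have H1 : 2 * c6 * ∑ w ∈ Z, Real.sqrt (v' w) + transportCost O Z v' ≤
      (2 * c6 * ∑ w ∈ Z, Real.sqrt (v w) + c6 * δ * (Real.sqrt m0)⁻¹) +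
      ((∫ x in O, ‖x - T x‖ ^ 2) + δ * c) :=
    add_le_add hs2 (hcost'.trans hs1)
  have H2 : 2 * c6 * ∑ w ∈ Z, Real.sqrt (v w) + (∫ x in O, ‖x - T x‖ ^ 2) ≤
      (2 * c6 * ∑ w ∈ Z, Real.sqrt (v w) + (∫ x in O, ‖x - T x‖ ^ 2)) +
      (c6 * δ * (Real.sqrt m0)⁻¹ + δ * c) :=
    hEmin.trans (H1.trans (le_of_eq (by ring)))
  have hfinal : (0:ℝ) ≤ c6 * δ * (Real.sqrt m0)⁻¹ + δ * c :=
    (le_add_iff_nonneg_right _).mp H2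
  have hneg : c6 * δ * (Real.sqrt m0)⁻¹ + δ * c < 0 := by
    have hac : c6 * (Real.sqrt m0)⁻¹ + c = r ^ 2 - (r + κ) ^ 2 := by
      rw [hcdef, hr2, hadef]; ring
    have h1 : c6 * δ * (Real.sqrt m0)⁻¹ + δ * c = δ * (c6 * (Real.sqrt m0)⁻¹ + c) := by ring
    rw [h1, hac]
    have h2 : r ^ 2 - (r + κ) ^ 2 < 0 := by nlinarith
    exact mul_neg_of_pos_of_neg hδpos h2
  linarith
end
end
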